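/- arXiv:2407.17134 — 15 statements merged into one kernel-verified Lean document; each statement's English description precedes it below -/
import Mathlib

section
/- In a left near-field (F, +, ·), the set 𝔡 of left distributive elements is closed under addition; consequently (𝔡, +, ·) is a division ring. -/
/-- A left near-field: `(F,+)` is a group, `(F \ {0}, ·)` is a group,
`0` is absorbing, and the left distributive law holds. -/
class LeftNearField (F : Type*) extends AddGroup F, Monoid F, Inv F where
  zero_mul : ∀ a : F, 0 * a = 0
  mul_zero : ∀ a : F, a * 0 = 0
  left_distrib : ∀ a b c : F, a * (b + c) = a * b + a * c
  mul_inv_cancel : ∀ a : F, a ≠ 0 → a * a⁻¹ = 1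
  inv_mul_cancel : ∀ a : F, a ≠ 0 → a⁻¹ * a = 1
  one_ne_zero : (1 : F) ≠ 0

/-- The set of left distributive elements of a left near-field. -/
def dstr (F : Type*) [LeftNearField F] : Set F :=
  {γ : F | ∀ α β : F, (α + β) * γ = α * γ + β * γ}

namespace LNFAux

variable {F : Type*} [LeftNearField F]

lemma ld (a b c : F) : a * (b + c) = a * b + a * c := LeftNearField.left_distrib a b c

lemma mz (a : F) : a * 0 = 0 := LeftNearField.mul_zero a

lemma mul_neg' (a b : F) : a * (-b) = -(a * b) := by
  have h := ld a b (-b)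
  rw [add_neg_cancel, mz] at h
  exact eq_neg_of_add_eq_zero_right h.symm

lemma neg_one_sq' : ((-1 : F)) * (-1) = 1 := by
  have h := mul_neg' (-1 : F) (1 : F)
  rw [mul_one] at h
  rw [h, neg_neg]

lemma phi_phi (x : F) : (-1 : F) * ((-1) * x) = x := by
  rw [← mul_assoc, neg_one_sq', one_mul]

lemma phi_add (x y : F) : (-1 : F) * (x + y) = (-1) * x + (-1) * y := ld _ _ _

lemma phi_neg (x : F) : (-1 : F) * (-x) = -((-1 : F) * x) := mul_neg' _ _

lemma mul_left_cancel₀' {a : F} (ha : a ≠ 0) {x y : F} (h : a * x = a * y) : x = y := by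
  have h2 := congrArg (fun t => a⁻¹ * t) h
  simpa [← mul_assoc, LeftNearField.inv_mul_cancel a ha] using h2

lemma mul_right_cancel₀' {a : F} (ha : a ≠ 0) {x y : F} (h : x * a = y * a) : x = y := by
  have h2 := congrArg (fun t => t * a⁻¹) h
  simpa [mul_assoc, LeftNearField.mul_inv_cancel a ha] using h2

lemma phi_fix {x : F} (h2 : (1 : F) + 1 ≠ 0) (hx : (-1 : F) * x = x) : x = 0 := by
  by_contra h0
  have h3 := congrArg (fun t => t * x⁻¹) hx
  simp only [mul_assoc, LeftNearField.mul_inv_cancel x h0, mul_one] at h3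
  -- h3 : (-1 : F) = 1
  have e := add_neg_cancel (1 : F)
  rw [h3] at e
  exact h2 e

/-- The set of elements commuting with `-1`, as a predicate. -/
def inS (m : F) : Prop := (-1 : F) * m = -m

lemma inS_mul {m n : F} (hm : inS m) (hn : inS n) : inS (m * n) := by
  unfold inS at *
  calc (-1 : F) * (m * n) = ((-1) * m) * n := (mul_assoc _ _ _).symm
    _ = (-m) * n := by rw [hm]
    _ = (m * (-1)) * n := by rw [mul_neg' m 1, mul_one]
    _ = m * ((-1) * n) := mul_assoc _ _ _
    _ = m * (-n) := by rw [hn]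
    _ = -(m * n) := mul_neg' _ _

lemma inS_inv {m : F} (hm : inS m) (h0 : m ≠ 0) : inS m⁻¹ := by
  unfold inS at *
  apply mul_left_cancel₀' h0
  calc m * ((-1 : F) * m⁻¹) = (m * (-1)) * m⁻¹ := (mul_assoc _ _ _).symm
    _ = (-m) * m⁻¹ := by rw [mul_neg' m 1, mul_one]
    _ = ((-1) * m) * m⁻¹ := by rw [hm]
    _ = (-1) * (m * m⁻¹) := mul_assoc _ _ _
    _ = -(m * m⁻¹) := by rw [LeftNearField.mul_inv_cancel m h0, mul_one]
    _ = m * (-m⁻¹) := (mul_neg' m m⁻¹).symm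

/-- The "twisting" map `x ↦ -x + (-1)*x`. -/
def U (x : F) : F := -x + (-1 : F) * x

lemma U_inS (x : F) : inS (U x) := by
  show (-1 : F) * (-x + (-1) * x) = -(-x + (-1 : F) * x)
  rw [phi_add, phi_neg, phi_phi, neg_add_rev, neg_neg]

lemma U_inj {x y : F} (h2 : (1 : F) + 1 ≠ 0) (h : U x = U y) : x = y := by
  simp only [U] at h
  -- h : -x + (-1)*x = -y + (-1)*y
  have e1 : (-1 : F) * x = x + (-y + (-1) * y) := by rw [← h, add_neg_cancel_left]
  have e2 : (-1 : F) * x + -((-1 : F) * y) = x + -y := by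
    rw [e1, ← add_assoc, add_neg_cancel_right]
  have e3 : (-1 : F) * (x + -y) = x + -y := by rw [phi_add, phi_neg]; exact e2
  have e4 : x + -y = 0 := phi_fix h2 e3
  rw [← sub_eq_add_neg] at e4
  exact sub_eq_zero.mp e4

lemma key (h2 : (1 : F) + 1 ≠ 0) (x : F) : inS x := by
  set w : F := -(1 + 1) with hw
  have hw0 : w ≠ 0 := by rw [hw, neg_ne_zero]; exact h2
  have hwS : inS w := by
    show (-1 : F) * (-(1 + 1)) = -(-(1 + 1) : F)
    rw [phi_neg, ld, mul_one, neg_neg, neg_add_rev, neg_neg]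
  have hwinv : inS w⁻¹ := inS_inv hwS hw0
  set m : F := U x * w⁻¹ with hm
  have hmS : inS m := inS_mul (U_inS x) hwinv
  have hmS' : (-1 : F) * m = -m := hmS
  have l1 : m * w = -m + -m := by
    rw [hw, mul_neg', ld, mul_one, neg_add_rev]
  have l2 : m * w = U x := by
    rw [hm, mul_assoc, LeftNearField.inv_mul_cancel w hw0, mul_one]
  have hUm : U m = U x := by
    show -m + (-1 : F) * m = U x
    rw [hmS', ← l1, l2]
  have hx : m = x := U_inj h2 hUm
  rw [← hx]
  exact hmS

/-- Neumann's theorem: the additive group of a (left) near-field is abelian. -/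
lemma add_comm' (a b : F) : a + b = b + a := by
  by_cases h2 : (1 : F) + 1 = 0
  · -- characteristic 2 : exponent 2, hence abelian
    have hx : ∀ x : F, x + x = 0 := by
      intro x
      have t := ld x 1 1
      rw [h2, mz, mul_one] at t
      exact t.symm
    have hneg : ∀ x : F, -x = x := by
      intro x
      have t := hx x
      calc -x = -x + (x + x) := by rw [t, add_zero]
        _ = x := by rw [← add_assoc, neg_add_cancel, zero_add]
    calc a + b = -(a + b) := (hneg _).symm
      _ = -b + -a := neg_add_rev a b
      _ = b + a := by rw [hneg b, hneg a]
  · -- main case via `key`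
    have h1 : ∀ x y : F, -x + -y = -y + -x := by
      intro x y
      have kx : (-1 : F) * x = -x := key h2 x
      have ky : (-1 : F) * y = -y := key h2 y
      have kxy : (-1 : F) * (x + y) = -(x + y) := key h2 (x + y)
      have e1 : (-1 : F) * (x + y) = -x + -y := by rw [ld, kx, ky]
      have e2 : (-1 : F) * (x + y) = -y + -x := by rw [kxy, neg_add_rev]
      exact e1.symm.trans e2
    have h3 := h1 (-a) (-b)
    rwa [neg_neg, neg_neg] at h3

lemma add_shuffle (u v w z : F) : u + v + (w + z) = u + w + (v + z) := by
  rw [add_assoc, ← add_assoc v w z, add_comm' v w, add_assoc w v z,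
    ← add_assoc u w (v + z)]

end LNFAux

open LNFAux in
/-- In a left near-field, the set `𝔡` of left distributive elements is closed
under addition; consequently `(𝔡, +, ·)` is a division ring (it contains `0`
and `1`, is closed under negation, multiplication and inverses of nonzero
elements, its addition is commutative, and both distributive laws hold on it;
together with the ambient associativity and group axioms these are exactly the
division ring axioms for `𝔡`). -/
theorem stmt1 (F : Type*) [LeftNearField F] :
    (∀ a b : F, a ∈ dstr F → b ∈ dstr F → a + b ∈ dstr F) ∧
    ((0 : F) ∈ dstr F ∧ (1 : F) ∈ dstr F ∧
      (∀ a ∈ dstr F, -a ∈ dstr F) ∧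
      (∀ a ∈ dstr F, ∀ b ∈ dstr F, a * b ∈ dstr F) ∧
      (∀ a ∈ dstr F, a ≠ 0 → a⁻¹ ∈ dstr F) ∧
      (∀ a ∈ dstr F, ∀ b ∈ dstr F, a + b = b + a) ∧
      (∀ a b c : F, a ∈ dstr F → b ∈ dstr F → c ∈ dstr F →
        a * (b + c) = a * b + a * c ∧ (a + b) * c = a * c + b * c)) := by
  refine ⟨?_, ?_, ?_, ?_, ?_, ?_, ?_, ?_⟩
  · -- closure under addition
    intro a b ha hb
    replace ha : ∀ α β : F, (α + β) * a = α * a + β * a := ha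
    replace hb : ∀ α β : F, (α + β) * b = α * b + β * b := hb
    intro α β
    show (α + β) * (a + b) = α * (a + b) + β * (a + b)
    rw [ld, ld, ld, ha α β, hb α β]
    exact add_shuffle _ _ _ _
  · -- 0 ∈ dstr
    intro α β
    show (α + β) * 0 = α * 0 + β * 0
    rw [mz, mz, mz, add_zero]
  · -- 1 ∈ dstr
    intro α β
    show (α + β) * 1 = α * 1 + β * 1
    rw [mul_one, mul_one, mul_one]
  · -- negation
    intro a ha
    replace ha : ∀ α β : F, (α + β) * a = α * a + β * a := ha
    intro α β
    show (α + β) * (-a) = α * (-a) + β * (-a)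
    rw [mul_neg', mul_neg', mul_neg', ha α β, neg_add_rev]
    exact add_comm' _ _
  · -- multiplication
    intro a ha b hb
    replace ha : ∀ α β : F, (α + β) * a = α * a + β * a := ha
    replace hb : ∀ α β : F, (α + β) * b = α * b + β * b := hb
    intro α β
    show (α + β) * (a * b) = α * (a * b) + β * (a * b)
    rw [← mul_assoc, ha α β, hb (α * a) (β * a), mul_assoc, mul_assoc]
  · -- inverses
    intro a ha ha0
    replace ha : ∀ α β : F, (α + β) * a = α * a + β * a := ha
    intro α β
    show (α + β) * a⁻¹ = α * a⁻¹ + β * a⁻¹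
    apply mul_right_cancel₀' ha0
    rw [mul_assoc, LeftNearField.inv_mul_cancel a ha0, mul_one,
      ha (α * a⁻¹) (β * a⁻¹), mul_assoc, mul_assoc,
      LeftNearField.inv_mul_cancel a ha0, mul_one, mul_one]
  · -- commutativity of addition on dstr
    intro a _ b _
    exact add_comm' a b
  · -- both distributive laws
    intro a b c _ _ hc
    replace hc : ∀ α β : F, (α + β) * c = α * c + β * c := hc
    exact ⟨ld a b c, hc a b⟩
end

section
/- Let V be a near-vector space over a scalar group F and let u be a nonzero element of the quasi-kernel Q(V). Then for every nonzero λ ∈ F and all α, β ∈ F, the induced additions satisfy α +_{λu} β = (αλ +_u βλ)λ⁻¹. -/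
/-- A scalar group `(F, ·, 1, 0, -1)`: a monoid with an absorbing zero such that
`(F \ {0}, ·)` is a group and `{±1}` is the solution set of `x² = 1`. -/
class ScalarGroup (F : Type*) extends Monoid F, Zero F, Inv F where
  negOne : F
  zero_mul : ∀ a : F, 0 * a = 0
  mul_zero : ∀ a : F, a * 0 = 0
  one_ne_zero : (1 : F) ≠ 0
  sq_iff : ∀ x : F, x * x = 1 ↔ x = 1 ∨ x = negOne
  mul_inv_cancel : ∀ a : F, a ≠ 0 → a * a⁻¹ = 1
  inv_mul_cancel : ∀ a : F, a ≠ 0 → a⁻¹ * a = 1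

/-- A (left) near-vector space over a scalar group `F`: an additive abelian
group `V` with a free action of `F` by additive endomorphisms, such that the
quasi-kernel generates `V` as an additive group. -/
class NearVectorSpace (F V : Type*) [ScalarGroup F] [AddCommGroup V] extends
    SMul F V where
  one_smul : ∀ v : V, (1 : F) • v = v
  mul_smul : ∀ (a b : F) (v : V), (a * b) • v = a • (b • v)
  smul_add : ∀ (a : F) (v w : V), a • (v + w) = a • v + a • w
  zero_smul : ∀ v : V, (0 : F) • v = 0
  free : ∀ (a b : F) (v : V), v ≠ 0 → a • v = b • v → a = b
  gen : AddSubgroup.closure {v : V | ∀ α β : F, ∃ γ : F, α • v + β • v = γ • v} = ⊤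

/-- The quasi-kernel `Q(V)` of a near-vector space. -/
def quasiKernel (F V : Type*) [ScalarGroup F] [AddCommGroup V] [NearVectorSpace F V] :
    Set V :=
  {v : V | ∀ α β : F, ∃ γ : F, α • v + β • v = γ • v}

/-- The distributive elements `𝔡_u` of the near-field `F_u = (F, +_u, ·)`, where
`p = +_u` is the addition induced by a nonzero quasi-kernel element `u`. -/
def dstrU {F : Type*} [ScalarGroup F] (p : F → F → F) : Set F :=
  {γ : F | ∀ α β : F, p α β * γ = p (α * γ) (β * γ)}

/-- `Q_u(V)`: the set of quasi-kernel elements whose induced addition is `p = +_u`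
(together with `0`, which satisfies the condition trivially). -/
def QU (F V : Type*) [ScalarGroup F] [AddCommGroup V] [NearVectorSpace F V]
    (p : F → F → F) : Set V :=
  {v : V | v ∈ quasiKernel F V ∧ ∀ α β : F, α • v + β • v = p α β • v}

/-- Iterated sum with respect to the addition `p = +_u` (whose neutral element is `0`). -/
def usum {F : Type*} [ScalarGroup F] (p : F → F → F) : List F → F
  | [] => 0
  | a :: l => p a (usum p l)

/-- For a nonzero quasi-kernel element `u` and nonzero `λ ∈ F`, the induced
additions satisfy `α +_{λu} β = (αλ +_u βλ)λ⁻¹`. -/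
theorem stmt2 (F V : Type*) [ScalarGroup F] [AddCommGroup V] [NearVectorSpace F V]
    (u : V) (hu : u ∈ quasiKernel F V) (hu0 : u ≠ 0)
    (lam : F) (hlam : lam ≠ 0) (p q : F → F → F)
    (hp : ∀ α β : F, α • u + β • u = p α β • u)
    (hq : ∀ α β : F, α • (lam • u) + β • (lam • u) = q α β • (lam • u)) :
    ∀ α β : F, q α β = p (α * lam) (β * lam) * lam⁻¹ := by
  have hlu : lam • u ≠ 0 := by
    intro h
    apply hlam
    exact NearVectorSpace.free lam 0 u hu0 (by rw [h, NearVectorSpace.zero_smul])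
  intro α β
  apply NearVectorSpace.free _ _ _ hlu
  rw [← hq α β]
  rw [← NearVectorSpace.mul_smul, ← NearVectorSpace.mul_smul,
      ← NearVectorSpace.mul_smul, hp (α * lam) (β * lam),
      mul_assoc, ScalarGroup.inv_mul_cancel lam hlam, mul_one]
end

section
/- Let V be a near-vector space over a scalar group F, let u, v be nonzero elements of the quasi-kernel Q(V), and suppose +_u = +_v. Then +_{γu} = +_{γv} for all nonzero γ ∈ F. -/
/-- If `u, v` are nonzero quasi-kernel elements with `+_u = +_v`, then
`+_{γu} = +_{γv}` for every nonzero `γ ∈ F`. -/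
theorem stmt3 (F V : Type*) [ScalarGroup F] [AddCommGroup V] [NearVectorSpace F V]
    (u v : V) (hu : u ∈ quasiKernel F V) (hu0 : u ≠ 0)
    (hv : v ∈ quasiKernel F V) (hv0 : v ≠ 0)
    (p : F → F → F)
    (hpu : ∀ α β : F, α • u + β • u = p α β • u)
    (hpv : ∀ α β : F, α • v + β • v = p α β • v)
    (γ : F) (hγ : γ ≠ 0) (q r : F → F → F)
    (hq : ∀ α β : F, α • (γ • u) + β • (γ • u) = q α β • (γ • u))
    (hr : ∀ α β : F, α • (γ • v) + β • (γ • v) = r α β • (γ • v)) :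
    q = r := by
  funext α β
  have key : ∀ (w : V), w ≠ 0 →
      (∀ α β : F, α • w + β • w = p α β • w) →
      ∀ (s : F → F → F), (∀ α β : F, α • (γ • w) + β • (γ • w) = s α β • (γ • w)) →
      s α β * γ = p (α * γ) (β * γ) := by
    intro w hw0 hpw s hs
    apply NearVectorSpace.free _ _ w hw0
    rw [NearVectorSpace.mul_smul]
    calc s α β • γ • w = α • (γ • w) + β • (γ • w) := (hs α β).symm
      _ = (α * γ) • w + (β * γ) • w := by
          rw [NearVectorSpace.mul_smul, NearVectorSpace.mul_smul]
      _ = p (α * γ) (β * γ) • w := hpw _ _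
  have h1 := key u hu0 hpu q hq
  have h2 := key v hv0 hpv r hr
  have h3 : q α β * γ = r α β * γ := h1.trans h2.symm
  have := congrArg (· * γ⁻¹) h3
  simpa [mul_assoc, ScalarGroup.mul_inv_cancel γ hγ] using this
end

section
/- Let V be a near-vector space over a scalar group F and u a nonzero element of the quasi-kernel. For every nonzero λ in the set 𝔡_u of distributive elements of the near-field F_u = (F, +_u, ·), one has +_{λu} = +_u. -/
/-- For a nonzero quasi-kernel element `u` and every nonzero distributive element
`λ ∈ 𝔡_u*` of the near-field `F_u = (F, +_u, ·)`, one has `+_{λu} = +_u`. -/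
theorem stmt4 (F V : Type*) [ScalarGroup F] [AddCommGroup V] [NearVectorSpace F V]
    (u : V) (hu : u ∈ quasiKernel F V) (hu0 : u ≠ 0)
    (p : F → F → F) (hp : ∀ α β : F, α • u + β • u = p α β • u)
    (lam : F) (hlam : lam ≠ 0) (hlamd : lam ∈ dstrU p)
    (q : F → F → F)
    (hq : ∀ α β : F, α • (lam • u) + β • (lam • u) = q α β • (lam • u)) :
    q = p := by
  funext α β
  have key : (q α β * lam) • u = (p α β * lam) • u := by
    rw [NearVectorSpace.mul_smul, NearVectorSpace.mul_smul, ← hq α β,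
      ← NearVectorSpace.mul_smul, ← NearVectorSpace.mul_smul, hp, ← hlamd α β, NearVectorSpace.mul_smul]
  have h := NearVectorSpace.free (V := V) _ _ u hu0 key
  calc q α β = q α β * lam * lam⁻¹ := by
        rw [mul_assoc, ScalarGroup.mul_inv_cancel lam hlam, mul_one]
    _ = p α β * lam * lam⁻¹ := by rw [h]
    _ = p α β := by rw [mul_assoc, ScalarGroup.mul_inv_cancel lam hlam, mul_one]
end

section
/- Let V be a near-vector space over a scalar group F, u a nonzero element of the quasi-kernel, and λ a nonzero element of F. Then the set of distributive elements of F_{λu} equals λ 𝔡_u λ⁻¹, where 𝔡_u is the set of distributive elements of F_u; i.e., 𝔡_{λu} = λ 𝔡_u λ⁻¹. -/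
/-- For a nonzero quasi-kernel element `u` and nonzero `λ ∈ F`, the distributive
elements of `F_{λu}` are exactly `λ 𝔡_u λ⁻¹`. -/
theorem stmt7 (F V : Type*) [ScalarGroup F] [AddCommGroup V] [NearVectorSpace F V]
    (u : V) (hu : u ∈ quasiKernel F V) (hu0 : u ≠ 0)
    (lam : F) (hlam : lam ≠ 0)
    (p q : F → F → F)
    (hp : ∀ α β : F, α • u + β • u = p α β • u)
    (hq : ∀ α β : F, α • (lam • u) + β • (lam • u) = q α β • (lam • u)) :
    dstrU q = (fun d => lam * d * lam⁻¹) '' dstrU p := by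

  have hinv : lam⁻¹ * lam = 1 := ScalarGroup.inv_mul_cancel lam hlam
  have hinv' : lam * lam⁻¹ = 1 := ScalarGroup.mul_inv_cancel lam hlam
  have hlu : lam • u ≠ 0 := by
    intro h
    apply hlam
    apply NearVectorSpace.free lam 0 u hu0
    rw [h, NearVectorSpace.zero_smul]
  have key : ∀ α β : F, q α β = p (α * lam) (β * lam) * lam⁻¹ := by
    intro α β
    apply NearVectorSpace.free _ _ _ hlu
    rw [← hq]
    rw [← NearVectorSpace.mul_smul, ← NearVectorSpace.mul_smul,
      ← NearVectorSpace.mul_smul, mul_assoc, hinv, mul_one, hp]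
  ext γ
  constructor
  · intro hγ
    refine ⟨lam⁻¹ * γ * lam, ?_, ?_⟩
    · intro α β
      have h := hγ (α * lam⁻¹) (β * lam⁻¹)
      rw [key, key, mul_assoc α lam⁻¹ lam, hinv, mul_one,
        mul_assoc β lam⁻¹ lam, hinv, mul_one] at h
      have h2 := congrArg (· * lam) h
      simp only [mul_assoc, hinv, mul_one] at h2 ⊢
      exact h2
    · simp only [mul_assoc, hinv']
      rw [← mul_assoc, hinv', one_mul, mul_one]
  · rintro ⟨d, hd, rfl⟩
    intro α β
    rw [key, key]
    simp only [mul_assoc, hinv, mul_one]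
    rw [← mul_assoc lam⁻¹ lam, hinv, one_mul,
      ← mul_assoc (p (α*lam) (β*lam)) d lam⁻¹, hd (α*lam) (β*lam)]
    simp only [mul_assoc]
end

section
/- Let V be a near-vector space over a scalar group F and u a nonzero element of the quasi-kernel Q(V). Then Q_u(V) = {v ∈ Q(V)\{0} : +_v = +_u} ∪ {0} is closed under the addition of V and under scalar multiplication by elements of 𝔡_u, and forms a left vector space over the division ring 𝔡_u. -/
/-- `Q_u(V)` is closed under the addition of `V` and under scalar multiplication
by distributive elements of `F_u`, and it forms a left vector space over the
division ring `𝔡_u`: it contains `0`, is closed under negation, scalars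
distribute over vector addition (inherited from `V`), and
`(d +_u e) • v = d • v + e • v` with `d +_u e` again distributive. -/
theorem stmt8 (F V : Type*) [ScalarGroup F] [AddCommGroup V] [NearVectorSpace F V]
    (u : V) (hu : u ∈ quasiKernel F V) (hu0 : u ≠ 0)
    (p : F → F → F) (hp : ∀ α β : F, α • u + β • u = p α β • u) :
    (0 : V) ∈ QU F V p ∧
    (∀ v ∈ QU F V p, ∀ w ∈ QU F V p, v + w ∈ QU F V p) ∧
    (∀ v ∈ QU F V p, -v ∈ QU F V p) ∧
    (∀ d ∈ dstrU p, ∀ v ∈ QU F V p, d • v ∈ QU F V p) ∧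
    (∀ d ∈ dstrU p, ∀ e ∈ dstrU p, ∀ v ∈ QU F V p, d • v + e • v = p d e • v) ∧
    (∀ d ∈ dstrU p, ∀ e ∈ dstrU p, p d e ∈ dstrU p) := by

  have hsz : ∀ a : F, a • (0 : V) = 0 := by
    intro a
    have h := NearVectorSpace.smul_add a (0 : V) 0
    rw [zero_add] at h
    exact (left_eq_add.mp h)
  have hsneg : ∀ (a : F) (v : V), a • (-v) = -(a • v) := by
    intro a v
    have h : a • v + a • (-v) = 0 := by
      rw [← NearVectorSpace.smul_add, add_neg_cancel, hsz]
    exact eq_neg_of_add_eq_zero_right h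
  refine ⟨?_, ?_, ?_, ?_, ?_, ?_⟩
  · refine ⟨fun α β => ⟨0, ?_⟩, fun α β => ?_⟩ <;> simp [hsz]
  · rintro v ⟨-, hv⟩ w ⟨-, hw⟩
    have key : ∀ α β : F, α • (v + w) + β • (v + w) = p α β • (v + w) := by
      intro α β
      rw [NearVectorSpace.smul_add, NearVectorSpace.smul_add, NearVectorSpace.smul_add]
      calc α • v + α • w + (β • v + β • w)
          = (α • v + β • v) + (α • w + β • w) := by abel
        _ = p α β • v + p α β • w := by rw [hv, hw]
    exact ⟨fun α β => ⟨p α β, key α β⟩, key⟩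
  · rintro v ⟨-, hv⟩
    have key : ∀ α β : F, α • (-v) + β • (-v) = p α β • (-v) := by
      intro α β
      rw [hsneg, hsneg, hsneg, ← neg_add, hv]
    exact ⟨fun α β => ⟨p α β, key α β⟩, key⟩
  · rintro d hd v ⟨-, hv⟩
    have key : ∀ α β : F, α • (d • v) + β • (d • v) = p α β • (d • v) := by
      intro α β
      rw [← NearVectorSpace.mul_smul, ← NearVectorSpace.mul_smul, ← NearVectorSpace.mul_smul,
        hd α β, hv]
    exact ⟨fun α β => ⟨p α β, key α β⟩, key⟩
  · rintro d - e - v ⟨-, hv⟩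
    exact hv d e
  · rintro d hd e he α β
    apply NearVectorSpace.free _ _ u hu0
    have h1 : ∀ a : F, (a * p d e) • u = (a * d) • u + (a * e) • u := by
      intro a
      rw [NearVectorSpace.mul_smul, ← hp, NearVectorSpace.smul_add,
        ← NearVectorSpace.mul_smul, ← NearVectorSpace.mul_smul]
    calc (p α β * p d e) • u
        = (p α β * d) • u + (p α β * e) • u := h1 (p α β)
      _ = p (α * d) (β * d) • u + p (α * e) (β * e) • u := by rw [hd α β, he α β]
      _ = ((α * d) • u + (β * d) • u) + ((α * e) • u + (β * e) • u) := by
          rw [hp (α * d) (β * d), hp (α * e) (β * e)]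
      _ = ((α * d) • u + (α * e) • u) + ((β * d) • u + (β * e) • u) := by abel
      _ = (α * p d e) • u + (β * p d e) • u := by rw [h1 α, h1 β]
      _ = p (α * p d e) (β * p d e) • u := hp _ _
end

section
/- Let V be a near-vector space over a scalar group F, u a nonzero element of the quasi-kernel, and λ a nonzero element of F. Then Q_u(V) is a vector space over 𝔡_{λu} under the addition of V and the scalar multiplication α ⋆ v = (λ⁻¹αλ)·v, and this vector space is isomorphic (as a near-vector space, via the pair (Id, η) with η(α) = λαλ⁻¹) to the vector space Q_u(V) over 𝔡_u. -/
/-- `Q_u(V)` is a vector space over `𝔡_{λu}` under the addition of `V` and the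
scalar multiplication `α ⋆ v = (λ⁻¹αλ) • v`, and the pair `(Id, η)` with
`η(α) = λαλ⁻¹` is an isomorphism of near-vector spaces from `Q_u(V)` over `𝔡_u`
to `Q_u(V)` over `𝔡_{λu}`. -/
theorem stmt9 (F V : Type*) [ScalarGroup F] [AddCommGroup V] [NearVectorSpace F V]
    (u : V) (hu : u ∈ quasiKernel F V) (hu0 : u ≠ 0)
    (lam : F) (hlam : lam ≠ 0)
    (p q : F → F → F)
    (hp : ∀ α β : F, α • u + β • u = p α β • u)
    (hq : ∀ α β : F, α • (lam • u) + β • (lam • u) = q α β • (lam • u)) :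
    -- `⋆` is a vector space structure of `𝔡_{λu}` on `Q_u(V)`
    (∀ d ∈ dstrU q, ∀ v ∈ QU F V p, (lam⁻¹ * d * lam) • v ∈ QU F V p) ∧
    (∀ d ∈ dstrU q, ∀ e ∈ dstrU q, ∀ v ∈ QU F V p,
      (lam⁻¹ * d * lam) • v + (lam⁻¹ * e * lam) • v = (lam⁻¹ * q d e * lam) • v) ∧
    (∀ v ∈ QU F V p, (lam⁻¹ * 1 * lam) • v = v) ∧
    -- `η : 𝔡_u → 𝔡_{λu}`, `η(α) = λαλ⁻¹`, is a multiplicative bijection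
    Set.BijOn (fun d => lam * d * lam⁻¹) (dstrU p) (dstrU q) ∧
    (∀ d e : F, lam * (d * e) * lam⁻¹ = (lam * d * lam⁻¹) * (lam * e * lam⁻¹)) ∧
    -- compatibility of `(Id, η)` with the scalar actions: `Id (d • v) = η d ⋆ Id v`
    (∀ d ∈ dstrU p, ∀ v ∈ QU F V p, (lam⁻¹ * (lam * d * lam⁻¹) * lam) • v = d • v) := by
  have hli : lam⁻¹ * lam = 1 := ScalarGroup.inv_mul_cancel lam hlam
  have hri : lam * lam⁻¹ = 1 := ScalarGroup.mul_inv_cancel lam hlam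
  have e1 : ∀ a : F, lam⁻¹ * (lam * a) = a := fun a => by rw [← mul_assoc, hli, one_mul]
  have e2 : ∀ a : F, lam * (lam⁻¹ * a) = a := fun a => by rw [← mul_assoc, hri, one_mul]
  have e3 : ∀ a : F, a * lam⁻¹ * lam = a := fun a => by rw [mul_assoc, hli, mul_one]
  have e4 : ∀ a : F, a * lam * lam⁻¹ = a := fun a => by rw [mul_assoc, hri, mul_one]
  have hlu : lam • u ≠ 0 := by
    intro h
    exact hlam (NearVectorSpace.free lam 0 u hu0 (by rw [h, NearVectorSpace.zero_smul]))
  -- relation between p and q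
  have hpq : ∀ α β : F, p (α * lam) (β * lam) = q α β * lam := by
    intro α β
    apply NearVectorSpace.free _ _ u hu0
    rw [← hp, NearVectorSpace.mul_smul α lam u, NearVectorSpace.mul_smul β lam u,
      NearVectorSpace.mul_smul (q α β) lam u, hq]
  have hqp : ∀ α β : F, p α β = q (α * lam⁻¹) (β * lam⁻¹) * lam := by
    intro α β
    rw [← hpq, e3, e3]
  have hqp2 : ∀ α β : F, q α β = p (α * lam) (β * lam) * lam⁻¹ := by
    intro α β
    rw [hpq, e4]
  -- left distributivity of q
  have hldq : ∀ γ α β : F, γ * q α β = q (γ * α) (γ * β) := by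
    intro γ α β
    apply NearVectorSpace.free _ _ (lam • u) hlu
    rw [NearVectorSpace.mul_smul γ (q α β) (lam • u), ← hq, NearVectorSpace.smul_add,
      ← NearVectorSpace.mul_smul γ α (lam • u), ← NearVectorSpace.mul_smul γ β (lam • u), hq]
  -- conjugation maps dstrU q into dstrU p
  have hdom : ∀ d ∈ dstrU q, lam⁻¹ * d * lam ∈ dstrU p := by
    intro d hd α β
    rw [hqp α β, hqp (α * (lam⁻¹ * d * lam)) (β * (lam⁻¹ * d * lam))]
    have h1 : ∀ x : F, x * (lam⁻¹ * d * lam) * lam⁻¹ = x * lam⁻¹ * d := by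
      intro x; simp [mul_assoc, e1, e2, hli, hri]
    rw [h1, h1, ← hd (α * lam⁻¹) (β * lam⁻¹)]
    simp [mul_assoc, e1, e2, hli, hri]
  have hcod : ∀ d ∈ dstrU p, lam * d * lam⁻¹ ∈ dstrU q := by
    intro d hd α β
    rw [hqp2 α β, hqp2 (α * (lam * d * lam⁻¹)) (β * (lam * d * lam⁻¹))]
    have h1 : ∀ x : F, x * (lam * d * lam⁻¹) * lam = x * lam * d := by
      intro x; simp [mul_assoc, e1, e2, hli, hri]
    rw [h1, h1, ← hd (α * lam) (β * lam)]
    simp [mul_assoc, e1, e2, hli, hri]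
  -- dstrU p scalars preserve QU p
  have hclosed : ∀ e ∈ dstrU p, ∀ v ∈ QU F V p, e • v ∈ QU F V p := by
    intro e he v hv
    have key : ∀ α β : F, α • (e • v) + β • (e • v) = p α β • (e • v) := by
      intro α β
      rw [← NearVectorSpace.mul_smul α e v, ← NearVectorSpace.mul_smul β e v,
        ← NearVectorSpace.mul_smul (p α β) e v, hv.2, ← he]
    exact ⟨fun α β => ⟨p α β, key α β⟩, key⟩
  refine ⟨?_, ?_, ?_, ⟨?_, ?_, ?_⟩, ?_, ?_⟩
  · intro d hd v hv
    exact hclosed _ (hdom d hd) v hv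
  · intro d hd e he v hv
    rw [hv.2]
    congr 1
    rw [hqp, e4, e4, hldq]
  · intro v hv
    rw [mul_one, hli, NearVectorSpace.one_smul]
  · intro d hd
    exact hcod d hd
  · intro d hd e he h
    have := congrArg (fun x => lam⁻¹ * x * lam) h
    simpa [mul_assoc, e1, e2, hli, hri] using this
  · intro d hd
    exact ⟨lam⁻¹ * d * lam, hdom d hd, by simp [mul_assoc, e1, e2, hli, hri]⟩
  · intro d e
    simp [mul_assoc, e1, e2, hli, hri]
  · intro d hd v hv
    have h1 : lam⁻¹ * (lam * d * lam⁻¹) * lam = d := by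
      simp [mul_assoc, e1, e2, hli, hri]
    rw [h1]
end

section
/- Let V be a near-vector space over a scalar group F, u a nonzero element of the quasi-kernel, and λ a nonzero element of F. The map θ(v) = λv together with η(α) = λαλ⁻¹ gives an isomorphism of near-vector spaces from the 𝔡_u-vector space Q_u(V) onto the 𝔡_{λu}-vector space Q_{λu}(V). -/
/-- The map `θ(v) = λv` together with `η(α) = λαλ⁻¹` is an isomorphism of
near-vector spaces from the `𝔡_u`-vector space `Q_u(V)` onto the
`𝔡_{λu}`-vector space `Q_{λu}(V)`: `θ` is an additive bijection of `Q_u(V)`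
onto `Q_{λu}(V)`, `η` is a multiplicative bijection of `𝔡_u` onto `𝔡_{λu}`,
and `θ(d • v) = η(d) • θ(v)`. -/
theorem stmt10 (F V : Type*) [ScalarGroup F] [AddCommGroup V] [NearVectorSpace F V]
    (u : V) (hu : u ∈ quasiKernel F V) (hu0 : u ≠ 0)
    (lam : F) (hlam : lam ≠ 0)
    (p q : F → F → F)
    (hp : ∀ α β : F, α • u + β • u = p α β • u)
    (hq : ∀ α β : F, α • (lam • u) + β • (lam • u) = q α β • (lam • u)) :
    Set.BijOn (fun v : V => lam • v) (QU F V p) (QU F V q) ∧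
    (∀ v w : V, lam • (v + w) = lam • v + lam • w) ∧
    Set.BijOn (fun d => lam * d * lam⁻¹) (dstrU p) (dstrU q) ∧
    (∀ d e : F, lam * (d * e) * lam⁻¹ = (lam * d * lam⁻¹) * (lam * e * lam⁻¹)) ∧
    (∀ d ∈ dstrU p, ∀ v ∈ QU F V p, lam • (d • v) = (lam * d * lam⁻¹) • (lam • v)) := by

  have minv : lam * lam⁻¹ = 1 := ScalarGroup.mul_inv_cancel lam hlam
  have invm : lam⁻¹ * lam = 1 := ScalarGroup.inv_mul_cancel lam hlam
  have hms := NearVectorSpace.mul_smul (F := F) (V := V)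
  have hos := NearVectorSpace.one_smul (F := F) (V := V)
  -- key identity relating q and p
  have hc : ∀ x : F, lam⁻¹ * (lam * x) = x := fun x => by rw [← mul_assoc, invm, one_mul]
  have hqp : ∀ α β : F, q α β = p (α * lam) (β * lam) * lam⁻¹ := by
    intro α β
    have h1 : (q α β * lam) • u = (p (α * lam) (β * lam)) • u := by
      rw [hms, ← hq α β, ← hp, hms, hms]
    have h2 := NearVectorSpace.free _ _ u hu0 h1
    calc q α β = q α β * (lam * lam⁻¹) := by rw [minv, mul_one]
      _ = (q α β * lam) * lam⁻¹ := by rw [mul_assoc]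
      _ = p (α * lam) (β * lam) * lam⁻¹ := by rw [h2]
  refine ⟨⟨?_, ?_, ?_⟩, ?_, ⟨?_, ?_, ?_⟩, ?_, ?_⟩
  · -- MapsTo for QU
    rintro v ⟨hvq, hvp⟩
    have key : ∀ α β : F, α • (lam • v) + β • (lam • v) = q α β • (lam • v) := by
      intro α β
      have : q α β * lam = p (α * lam) (β * lam) := by
        rw [hqp, mul_assoc, invm, mul_one]
      rw [← hms, ← hms, hvp, ← hms, this]
    exact ⟨fun α β => ⟨q α β, key α β⟩, key⟩
  · -- InjOn
    intro v _ w _ h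
    simp only at h
    have : (lam⁻¹ * lam) • v = (lam⁻¹ * lam) • w := by rw [hms, hms, h]
    rwa [invm, hos, hos] at this
  · -- SurjOn
    rintro w ⟨hwq, hwqu⟩
    refine ⟨lam⁻¹ • w, ?_, ?_⟩
    · have key : ∀ α β : F, α • (lam⁻¹ • w) + β • (lam⁻¹ • w) = p α β • (lam⁻¹ • w) := by
        intro α β
        have h1 : q (α * lam⁻¹) (β * lam⁻¹) = p α β * lam⁻¹ := by
          rw [hqp, mul_assoc α, invm, mul_one, mul_assoc β, invm, mul_one]
        rw [← hms, ← hms, hwqu, h1, hms]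
      exact ⟨fun α β => ⟨p α β, key α β⟩, key⟩
    · show lam • lam⁻¹ • w = w
      rw [← hms, minv, hos]
  · -- additivity
    exact fun v w => NearVectorSpace.smul_add lam v w
  · -- MapsTo for dstrU
    intro d hd α β
    simp only
    have e1 : q α β * (lam * d * lam⁻¹) = p (α * lam * d) (β * lam * d) * lam⁻¹ := by
      rw [hqp]
      calc p (α * lam) (β * lam) * lam⁻¹ * (lam * d * lam⁻¹)
          = p (α * lam) (β * lam) * d * lam⁻¹ := by
            rw [mul_assoc, ← mul_assoc lam⁻¹, ← mul_assoc lam⁻¹, invm, one_mul, ← mul_assoc]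
        _ = p (α * lam * d) (β * lam * d) * lam⁻¹ := by rw [hd]
    have e2 : q (α * (lam * d * lam⁻¹)) (β * (lam * d * lam⁻¹))
        = p (α * lam * d) (β * lam * d) * lam⁻¹ := by
      rw [hqp]
      congr 2 <;> simp only [mul_assoc, invm, mul_one]
    rw [e1, e2]
  · -- InjOn for dstrU
    intro d _ e _ h
    simp only at h
    have : lam⁻¹ * (lam * d * lam⁻¹) * lam = lam⁻¹ * (lam * e * lam⁻¹) * lam := by rw [h]
    calc d = lam⁻¹ * (lam * d * lam⁻¹) * lam := by
          rw [mul_assoc lam d, ← mul_assoc lam⁻¹, invm, one_mul, mul_assoc, invm, mul_one]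
      _ = lam⁻¹ * (lam * e * lam⁻¹) * lam := this
      _ = e := by
          rw [mul_assoc lam e, ← mul_assoc lam⁻¹, invm, one_mul, mul_assoc, invm, mul_one]
  · -- SurjOn for dstrU
    intro e he
    refine ⟨lam⁻¹ * e * lam, ?_, ?_⟩
    · intro α β
      have h1 := he (α * lam⁻¹) (β * lam⁻¹)
      rw [hqp, hqp] at h1
      rw [mul_assoc α, invm, mul_one, mul_assoc β, invm, mul_one] at h1
      -- h1 : p α β * lam⁻¹ * e = p (α*lam⁻¹*e*lam) (β*lam⁻¹*e*lam) * lam⁻¹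
      have h2 : p α β * lam⁻¹ * e * lam
          = p (α * lam⁻¹ * e * lam) (β * lam⁻¹ * e * lam) * lam⁻¹ * lam := by rw [h1]
      rw [mul_assoc _ lam⁻¹ lam, invm, mul_one] at h2
      calc p α β * (lam⁻¹ * e * lam) = p α β * lam⁻¹ * e * lam := by
            rw [mul_assoc, mul_assoc, mul_assoc]
        _ = p (α * lam⁻¹ * e * lam) (β * lam⁻¹ * e * lam) := h2
        _ = p (α * (lam⁻¹ * e * lam)) (β * (lam⁻¹ * e * lam)) := by
            congr 1 <;> rw [mul_assoc, mul_assoc, mul_assoc]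
    · show lam * (lam⁻¹ * e * lam) * lam⁻¹ = e
      rw [mul_assoc lam⁻¹, ← mul_assoc lam, minv, one_mul, mul_assoc, minv, mul_one]
  · -- multiplicativity of η
    intro d e
    simp only [mul_assoc]
    rw [hc]
  · -- compatibility
    intro d _ v _
    rw [← hms, ← hms]
    congr 1
    rw [mul_assoc (lam * d), invm, mul_one]
end

section
/- Let V be a near-vector space over a scalar group F, u a nonzero element of the quasi-kernel, δ a nonzero element of F, and ℬ a basis of the 𝔡_u-vector space Q_u(V). Then δℬ = {δb : b ∈ ℬ} is a basis of Q_{δu}(V) over the division ring 𝔡_{δu}. -/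
/-- If `ℬ` is a basis of the `𝔡_u`-vector space `Q_u(V)` then
`δℬ = {δb : b ∈ ℬ}` is a basis of `Q_{δu}(V)` over the division ring `𝔡_{δu}`. -/
theorem stmt11 (F V : Type*) [ScalarGroup F] [AddCommGroup V] [NearVectorSpace F V]
    (u : V) (hu : u ∈ quasiKernel F V) (hu0 : u ≠ 0)
    (δ : F) (hδ : δ ≠ 0)
    (p q : F → F → F)
    (hp : ∀ α β : F, α • u + β • u = p α β • u)
    (hq : ∀ α β : F, α • (δ • u) + β • (δ • u) = q α β • (δ • u))
    (B : Set V) (hB : B ⊆ QU F V p)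
    (hspan : ∀ v ∈ QU F V p, ∃ (s : Finset V) (c : V → F),
      ↑s ⊆ B ∧ (∀ b, c b ∈ dstrU p) ∧ v = ∑ b ∈ s, c b • b)
    (hindep : ∀ (s : Finset V) (c : V → F), ↑s ⊆ B → (∀ b, c b ∈ dstrU p) →
      ∑ b ∈ s, c b • b = 0 → ∀ b ∈ s, c b = 0) :
    ((fun b => δ • b) '' B ⊆ QU F V q) ∧
    (∀ v ∈ QU F V q, ∃ (s : Finset V) (c : V → F),
      ↑s ⊆ (fun b => δ • b) '' B ∧ (∀ b, c b ∈ dstrU q) ∧ v = ∑ b ∈ s, c b • b) ∧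
    (∀ (s : Finset V) (c : V → F), ↑s ⊆ (fun b => δ • b) '' B → (∀ b, c b ∈ dstrU q) →
      ∑ b ∈ s, c b • b = 0 → ∀ b ∈ s, c b = 0) := by
  classical
  have hsmul0 : ∀ a : F, a • (0:V) = 0 := by
    intro a
    have h := NearVectorSpace.smul_add a (0:V) 0
    rw [add_zero] at h
    exact (add_eq_left.mp h.symm)
  have hc1 : ∀ v : V, δ⁻¹ • (δ • v) = v := by
    intro v
    rw [← NearVectorSpace.mul_smul, ScalarGroup.inv_mul_cancel δ hδ, NearVectorSpace.one_smul]
  have hc2 : ∀ v : V, δ • (δ⁻¹ • v) = v := by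
    intro v
    rw [← NearVectorSpace.mul_smul, ScalarGroup.mul_inv_cancel δ hδ, NearVectorSpace.one_smul]
  have hδl : ∀ z : F, δ⁻¹ * (δ * z) = z := by
    intro z; rw [← mul_assoc, ScalarGroup.inv_mul_cancel δ hδ, one_mul]
  have hδr : ∀ z : F, δ * (δ⁻¹ * z) = z := by
    intro z; rw [← mul_assoc, ScalarGroup.mul_inv_cancel δ hδ, one_mul]
  have hqp : ∀ α β : F, q α β * δ = p (α * δ) (β * δ) := by
    intro α β
    apply NearVectorSpace.free _ _ u hu0
    rw [NearVectorSpace.mul_smul, ← hq, ← hp, NearVectorSpace.mul_smul, NearVectorSpace.mul_smul]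
  have hq' : ∀ α β : F, q α β = p (α * δ) (β * δ) * δ⁻¹ := by
    intro α β
    rw [← hqp, mul_assoc, ScalarGroup.mul_inv_cancel δ hδ, mul_one]
  have hpq : ∀ α β : F, p α β = q (α * δ⁻¹) (β * δ⁻¹) * δ := by
    intro α β
    have h := hqp (α * δ⁻¹) (β * δ⁻¹)
    simp only [mul_assoc, ScalarGroup.inv_mul_cancel δ hδ, mul_one] at h
    exact h.symm
  -- transfer of distributive elements
  have hd1 : ∀ x ∈ dstrU p, δ * x * δ⁻¹ ∈ dstrU q := by
    intro x hx α β
    rw [hq' α β, hq' (α * (δ * x * δ⁻¹)) (β * (δ * x * δ⁻¹))]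
    have hx' := hx (α * δ) (β * δ)
    simp only [mul_assoc, hδl, hδr, ScalarGroup.inv_mul_cancel δ hδ, mul_one] at *
    rw [← mul_assoc (p (α * δ) (β * δ)), hx']
  have hd2 : ∀ y ∈ dstrU q, δ⁻¹ * y * δ ∈ dstrU p := by
    intro y hy α β
    rw [hpq α β, hpq (α * (δ⁻¹ * y * δ)) (β * (δ⁻¹ * y * δ))]
    have hy' := hy (α * δ⁻¹) (β * δ⁻¹)
    simp only [mul_assoc, hδl, hδr, ScalarGroup.mul_inv_cancel δ hδ, mul_one] at *
    rw [← mul_assoc (q (α * δ⁻¹) (β * δ⁻¹)), hy']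
  -- transfers of QU membership
  have key1 : ∀ v : V, (∀ α β : F, α • v + β • v = p α β • v) →
      ∀ α β : F, α • (δ • v) + β • (δ • v) = q α β • (δ • v) := by
    intro v hvp α β
    rw [← NearVectorSpace.mul_smul, ← NearVectorSpace.mul_smul, hvp, ← hqp,
      NearVectorSpace.mul_smul]
  have hQ1 : ∀ v ∈ QU F V p, δ • v ∈ QU F V q := by
    intro v hv
    exact ⟨fun α β => ⟨q α β, key1 v hv.2 α β⟩, key1 v hv.2⟩
  have key2 : ∀ v : V, (∀ α β : F, α • v + β • v = q α β • v) →
      ∀ α β : F, α • (δ⁻¹ • v) + β • (δ⁻¹ • v) = p α β • (δ⁻¹ • v) := by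
    intro v hvq α β
    rw [← NearVectorSpace.mul_smul, ← NearVectorSpace.mul_smul, hvq, hpq,
      NearVectorSpace.mul_smul, hc2]
  have hQ2 : ∀ v ∈ QU F V q, δ⁻¹ • v ∈ QU F V p := by
    intro v hv
    exact ⟨fun α β => ⟨p α β, key2 v hv.2 α β⟩, key2 v hv.2⟩
  have hinj1 : Function.Injective (fun v : V => δ • v) := by
    intro x y h
    have := congrArg (fun w => δ⁻¹ • w) h
    simpa only [hc1] using this
  have hinj2 : Function.Injective (fun v : V => δ⁻¹ • v) := by
    intro x y h
    have := congrArg (fun w => δ • w) h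
    simpa only [hc2] using this
  have hsmulsum : ∀ (a : F) (s : Finset V) (f : V → V),
      a • (∑ b ∈ s, f b) = ∑ b ∈ s, a • f b := by
    intro a s f
    induction s using Finset.induction with
    | empty => simpa using hsmul0 a
    | @insert a s h ih => rw [Finset.sum_insert h, Finset.sum_insert h, NearVectorSpace.smul_add, ih]
  refine ⟨?_, ?_, ?_⟩
  · rintro w ⟨b, hb, rfl⟩
    exact hQ1 b (hB hb)
  · intro v hv
    obtain ⟨s, c, hsB, hc, hsum⟩ := hspan _ (hQ2 v hv)
    refine ⟨s.image (fun b => δ • b), fun w => δ * c (δ⁻¹ • w) * δ⁻¹, ?_, ?_, ?_⟩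
    · rw [Finset.coe_image]
      exact Set.image_mono hsB
    · intro w
      exact hd1 _ (hc (δ⁻¹ • w))
    · rw [Finset.sum_image (fun x _ y _ h => hinj1 h)]
      have : ∀ b : V, (δ * c (δ⁻¹ • (δ • b)) * δ⁻¹) • (δ • b) = δ • (c b • b) := by
        intro b
        rw [hc1, NearVectorSpace.mul_smul, hc1, NearVectorSpace.mul_smul]
      calc v = δ • (δ⁻¹ • v) := (hc2 v).symm
        _ = δ • (∑ b ∈ s, c b • b) := by rw [← hsum]
        _ = ∑ b ∈ s, δ • (c b • b) := hsmulsum δ s _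
        _ = ∑ b ∈ s, (δ * c (δ⁻¹ • (δ • b)) * δ⁻¹) • (δ • b) := by
            exact Finset.sum_congr rfl (fun b _ => (this b).symm)
  · intro s c hs hc hsum0 b hb
    have hs0 : ↑(s.image (fun v => δ⁻¹ • v)) ⊆ B := by
      intro w hw
      rw [Finset.coe_image] at hw
      obtain ⟨x, hx, rfl⟩ := hw
      obtain ⟨b', hb', hxb'⟩ := hs hx
      simp only [← hxb', hc1]
      exact hb'
    have hc0 : ∀ w, (fun w => δ⁻¹ * c (δ • w) * δ) w ∈ dstrU p := by
      intro w
      exact hd2 _ (hc (δ • w))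
    have hsum0' : ∑ w ∈ s.image (fun v => δ⁻¹ • v), (δ⁻¹ * c (δ • w) * δ) • w = 0 := by
      rw [Finset.sum_image (fun x _ y _ h => hinj2 h)]
      have : ∀ x : V, (δ⁻¹ * c (δ • δ⁻¹ • x) * δ) • (δ⁻¹ • x) = δ⁻¹ • (c x • x) := by
        intro x
        rw [hc2, NearVectorSpace.mul_smul, hc2, NearVectorSpace.mul_smul]
      calc ∑ x ∈ s, (δ⁻¹ * c (δ • δ⁻¹ • x) * δ) • (δ⁻¹ • x)
          = ∑ x ∈ s, δ⁻¹ • (c x • x) := Finset.sum_congr rfl (fun x _ => this x)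
        _ = δ⁻¹ • (∑ x ∈ s, c x • x) := (hsmulsum δ⁻¹ s _).symm
        _ = 0 := by rw [hsum0]; exact hsmul0 δ⁻¹
    have h0 := hindep _ _ hs0 hc0 hsum0' (δ⁻¹ • b)
      (Finset.mem_image_of_mem _ hb)
    simp only [hc2] at h0
    -- h0 : δ⁻¹ * c b * δ = 0
    have : c b = δ * (δ⁻¹ * c b * δ) * δ⁻¹ := by
      rw [mul_assoc δ⁻¹ (c b) δ, hδr, mul_assoc, ScalarGroup.mul_inv_cancel δ hδ, mul_one]
    rw [this, h0, ScalarGroup.mul_zero, ScalarGroup.zero_mul]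
end

section
/- Let F be a near-field and I a nonempty index set, and let F^(I) denote the near-vector space of finitely supported F-valued functions on I with componentwise operations. Then the quasi-kernel of F^(I) is exactly Q(F^(I)) = {λ(κ_i)_{i∈I} : λ ∈ F, each κ_i ∈ 𝔡}, where 𝔡 is the set of distributive elements of F. -/
/-- Scalar multiplication on the canonical near-vector space `F^(I)` of finitely
supported tuples over a near-field `F`. -/
noncomputable def nfSmul {F I : Type*} [LeftNearField F] (a : F) (f : I →₀ F) : I →₀ F :=
  Finsupp.mapRange (fun x => a * x) (LeftNearField.mul_zero a) f

lemma nfSmul_apply {F I : Type*} [LeftNearField F] (a : F) (f : I →₀ F) (i : I) :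
    nfSmul a f i = a * f i := rfl

/-- The quasi-kernel of `F^(I)` consists exactly of the scalar multiples of
tuples all of whose entries are distributive elements of `F`. -/
theorem stmt12 (F I : Type*) [LeftNearField F] [Nonempty I] :
    {v : I →₀ F | ∀ α β : F, ∃ γ : F, nfSmul α v + nfSmul β v = nfSmul γ v} =
      {v : I →₀ F | ∃ (l : F) (k : I →₀ F), (∀ i, k i ∈ dstr F) ∧ v = nfSmul l k} := by
  ext v
  simp only [Set.mem_setOf_eq]
  constructor
  · intro h
    by_cases hv : v = 0
    · refine ⟨0, 0, fun i α β => ?_, ?_⟩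
      · simp only [Finsupp.coe_zero, Pi.zero_apply, LeftNearField.mul_zero, add_zero]
      · subst hv
        ext i
        simp [nfSmul_apply, LeftNearField.mul_zero]
    · obtain ⟨j, hj⟩ := Finsupp.ne_iff.mp hv
      simp only [Finsupp.coe_zero, Pi.zero_apply] at hj
      set l := v j with hl
      refine ⟨l, nfSmul l⁻¹ v, fun i α β => ?_, ?_⟩
      · -- distributivity of l⁻¹ * v i
        obtain ⟨γ, hγ⟩ := h (α * l⁻¹) (β * l⁻¹)
        have hγi : ∀ i, α * l⁻¹ * v i + β * l⁻¹ * v i = γ * v i := fun i => by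
          have := DFunLike.congr_fun hγ i
          simpa [Finsupp.add_apply, nfSmul_apply] using this
        have hj' : α + β = γ * l := by
          have := hγi j
          rwa [mul_assoc α, mul_assoc β, LeftNearField.inv_mul_cancel l hj,
            mul_one, mul_one] at this
        have hγval : γ = (α + β) * l⁻¹ := by
          rw [hj', mul_assoc, LeftNearField.mul_inv_cancel l hj, mul_one]
        have := hγi i
        rw [hγval] at this
        simp only [nfSmul_apply]
        rw [← mul_assoc, ← mul_assoc, ← mul_assoc, ← this]
      · ext i
        rw [nfSmul_apply, nfSmul_apply, ← mul_assoc,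
          LeftNearField.mul_inv_cancel l hj, one_mul]
  · rintro ⟨l, k, hk, rfl⟩ α β
    by_cases hl : l = 0
    · refine ⟨0, ?_⟩
      ext i
      subst hl
      simp [nfSmul_apply, Finsupp.add_apply, LeftNearField.zero_mul,
        LeftNearField.mul_zero]
    · refine ⟨(α * l + β * l) * l⁻¹, ?_⟩
      ext i
      have hγl : (α * l + β * l) * l⁻¹ * l = α * l + β * l := by
        rw [mul_assoc, LeftNearField.inv_mul_cancel l hl, mul_one]
      simp only [Finsupp.add_apply, nfSmul_apply]
      rw [← mul_assoc, ← mul_assoc, ← mul_assoc, hγl, hk i]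
end

section
/- Let F be a near-field, I a nonempty index set, and F^(I) the canonical near-vector space of finitely supported tuples. For any δ ∈ F* and any tuple k = (k_i)_{i∈I} with all k_i in the distributive elements 𝔡 of F and k ≠ 0, the additions induced on F by δu and by δk coincide: +_{δk} = +_δ (where the addition induced by a nonzero quasi-kernel element w is defined by αw + βw = (α +_w β)w). -/
/-- In `F^(I)`, for `δ ∈ F*` and a nonzero tuple `k` with all entries in `𝔡`,
the addition `+_{δk}` induced on `F` by the quasi-kernel element `δk`
(characterised by `α•(δk) + β•(δk) = (α +_{δk} β)•(δk)`) coincides with the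
addition `+_δ` induced by `δ` on `F` itself (characterised by
`αδ + βδ = (α +_δ β)δ`). -/
theorem stmt13 (F I : Type*) [LeftNearField F] [Nonempty I]
    (δ : F) (hδ : δ ≠ 0) (k : I →₀ F) (hk : ∀ i, k i ∈ dstr F) (hk0 : k ≠ 0)
    (p q : F → F → F)
    (hp : ∀ α β : F,
      nfSmul α (nfSmul δ k) + nfSmul β (nfSmul δ k) = nfSmul (p α β) (nfSmul δ k))
    (hq : ∀ α β : F, α * δ + β * δ = q α β * δ) :
    p = q := by
  obtain ⟨i, hi⟩ : ∃ i, k i ≠ 0 := by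
    by_contra h
    push_neg at h
    exact hk0 (Finsupp.ext h)
  have cancel : ∀ a b c : F, c ≠ 0 → a * c = b * c → a = b := by
    intro a b c hc h
    have := congrArg (· * c⁻¹) h
    simpa [mul_assoc, LeftNearField.mul_inv_cancel c hc] using this
  funext α β
  have h1 := congrArg (fun f => f i) (hp α β)
  simp only [Finsupp.add_apply, nfSmul, Finsupp.mapRange_apply] at h1
  -- h1 : α * (δ * k i) + β * (δ * k i) = p α β * (δ * k i)
  have h2 : (α * δ + β * δ) * k i = p α β * δ * k i := by
    rw [hk i (α * δ) (β * δ)]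
    simpa [mul_assoc] using h1
  rw [hq α β] at h2
  exact cancel (p α β) (q α β) δ hδ (cancel _ _ _ hi h2.symm)
end

section
/- Let V be a nontrivial near-vector space over a scalar group F. Then V is regular (Q(V) = F·Q_u(V) for any nonzero u in the quasi-kernel) if and only if for all v, w ∈ Q(V)\{0}, the near-fields (F, +_v, ·) and (F, +_w, ·) are F-isomorphic as left near-vector spaces over F (i.e., there is an additive bijection θ: F → F with θ(αx) = αθ(x) for all α, x ∈ F, mapping (F,+_v) to (F,+_w)). -/
/-- A nontrivial near-vector space `V` is regular (`Q(V) = F·Q_u(V)` for any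
nonzero quasi-kernel element `u`) if and only if for all nonzero
`v, w ∈ Q(V)`, the near-vector spaces `(F, +_v)` and `(F, +_w)` over `F` are
`F`-isomorphic: there is an additive bijection `θ : (F, +_v) → (F, +_w)` with
`θ(αx) = αθ(x)`. -/
theorem stmt15 (F V : Type*) [ScalarGroup F] [AddCommGroup V] [NearVectorSpace F V]
    (hV : ∃ v : V, v ≠ 0)
    (P : V → F → F → F)
    (hP : ∀ v ∈ quasiKernel F V, v ≠ 0 → ∀ α β : F, α • v + β • v = P v α β • v) :
    (∀ u ∈ quasiKernel F V, u ≠ 0 →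
      quasiKernel F V = {w : V | ∃ lam : F, ∃ x ∈ QU F V (P u), w = lam • x}) ↔
    (∀ v ∈ quasiKernel F V, v ≠ 0 → ∀ w ∈ quasiKernel F V, w ≠ 0 →
      ∃ θ : F → F, Function.Bijective θ ∧
        (∀ α β : F, θ (P v α β) = P w (θ α) (θ β)) ∧
        (∀ α x : F, θ (α * x) = α * θ x)) := by
  have szero : ∀ a : F, a • (0 : V) = 0 := by
    intro a
    have h1 := NearVectorSpace.smul_add a (0 : V) 0
    rw [add_zero] at h1
    exact (left_eq_add.mp h1)
  constructor
  · -- regular → isomorphic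
    intro h v hv hv0 w hw hw0
    have hwmem : w ∈ {w : V | ∃ lam : F, ∃ x ∈ QU F V (P v), w = lam • x} := by
      rw [← h v hv hv0]; exact hw
    obtain ⟨lam, x, hx, hwe⟩ := hwmem
    have hlam : lam ≠ 0 := by
      intro hl; subst hl
      rw [NearVectorSpace.zero_smul] at hwe; exact hw0 hwe
    have hx0 : x ≠ 0 := by
      intro hl; subst hl
      rw [szero] at hwe; exact hw0 hwe
    -- key identity: P v (α*lam) (β*lam) = P w α β * lam
    have key : ∀ α β : F, P v (α * lam) (β * lam) = P w α β * lam := by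
      intro α β
      have e1 : α • w + β • w = P w α β • w := hP w hw hw0 α β
      have e2 : α • w + β • w = P v (α * lam) (β * lam) • x := by
        rw [hwe, ← NearVectorSpace.mul_smul, ← NearVectorSpace.mul_smul, hx.2]
      have e3 : P w α β • w = (P w α β * lam) • x := by
        rw [hwe, ← NearVectorSpace.mul_smul]
      exact NearVectorSpace.free _ _ x hx0 (e2.symm.trans (e1.trans e3))
    refine ⟨fun α => α * lam⁻¹, ?_, ?_, ?_⟩
    · refine Function.bijective_iff_has_inverse.mpr ⟨fun α => α * lam, ?_, ?_⟩
      · intro α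
        simp only [mul_assoc, ScalarGroup.inv_mul_cancel lam hlam, mul_one]
      · intro α
        simp only [mul_assoc, ScalarGroup.mul_inv_cancel lam hlam, mul_one]
    · intro α β
      have k := key (α * lam⁻¹) (β * lam⁻¹)
      rw [mul_assoc, ScalarGroup.inv_mul_cancel lam hlam, mul_one,
        mul_assoc, ScalarGroup.inv_mul_cancel lam hlam, mul_one] at k
      show P v α β * lam⁻¹ = P w (α * lam⁻¹) (β * lam⁻¹)
      rw [k, mul_assoc, ScalarGroup.mul_inv_cancel lam hlam, mul_one]
    · intro α y
      exact mul_assoc α y lam⁻¹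
  · -- isomorphic → regular
    intro h u hu hu0
    ext w
    constructor
    · intro hw
      by_cases hw0 : w = 0
      · subst hw0
        refine ⟨0, 0, ⟨?_, ?_⟩, (NearVectorSpace.zero_smul (0 : V)).symm⟩
        · intro α β
          exact ⟨0, by rw [szero, szero, szero, add_zero]⟩
        · intro α β
          rw [szero, szero, szero, add_zero]
      · obtain ⟨θ, hbij, hadd, hmul⟩ := h w hw hw0 u hu hu0
        set c := θ 1 with hc
        have hθ : ∀ α : F, θ α = α * c := by
          intro α
          have := hmul α 1
          rwa [mul_one] at this
        have hθ0 : θ 0 = 0 := by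
          have := hmul 0 0
          rwa [ScalarGroup.zero_mul, ScalarGroup.zero_mul] at this
        have hc0 : c ≠ 0 := by
          intro hcz
          have : (1 : F) = 0 := hbij.1 (by rw [hθ0, ← hc, hcz])
          exact ScalarGroup.one_ne_zero this
        -- identity: P u (α*c) (β*c) = P w α β * c
        have key : ∀ α β : F, P u (α * c) (β * c) = P w α β * c := by
          intro α β
          have := hadd α β
          rw [hθ α, hθ β, hθ (P w α β)] at this
          exact this.symm
        have key2 : ∀ α β : F, P w (α * c⁻¹) (β * c⁻¹) = P u α β * c⁻¹ := by
          intro α β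
          have k := key (α * c⁻¹) (β * c⁻¹)
          rw [mul_assoc, ScalarGroup.inv_mul_cancel c hc0, mul_one,
            mul_assoc, ScalarGroup.inv_mul_cancel c hc0, mul_one] at k
          rw [k, mul_assoc, ScalarGroup.mul_inv_cancel c hc0, mul_one]
        refine ⟨c, c⁻¹ • w, ⟨?_, ?_⟩, ?_⟩
        · intro α β
          refine ⟨P u α β, ?_⟩
          rw [← NearVectorSpace.mul_smul, ← NearVectorSpace.mul_smul,
            ← NearVectorSpace.mul_smul, hP w hw hw0 (α * c⁻¹) (β * c⁻¹),
            key2 α β]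
        · intro α β
          rw [← NearVectorSpace.mul_smul, ← NearVectorSpace.mul_smul,
            ← NearVectorSpace.mul_smul, hP w hw hw0 (α * c⁻¹) (β * c⁻¹),
            key2 α β]
        · rw [← NearVectorSpace.mul_smul, ScalarGroup.mul_inv_cancel c hc0,
            NearVectorSpace.one_smul]
    · rintro ⟨lam, x, hx, rfl⟩
      intro α β
      by_cases hlam : lam = 0
      · subst hlam
        rw [NearVectorSpace.zero_smul]
        exact ⟨0, by rw [szero, szero, szero, add_zero]⟩
      · refine ⟨P u (α * lam) (β * lam) * lam⁻¹, ?_⟩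
        rw [← NearVectorSpace.mul_smul, ← NearVectorSpace.mul_smul,
          ← NearVectorSpace.mul_smul, hx.2 (α * lam) (β * lam),
          mul_assoc, ScalarGroup.inv_mul_cancel lam hlam, mul_one]
end

section
/- Let V be a nontrivial near-vector space over a scalar group F and suppose V is F-isomorphic to the canonical near-vector space F_u^(I) for some nonzero quasi-kernel element u and index set I. Then V decomposes as the internal direct sum V = ⊕_{j∈J} Q_{δ_j u}(V), where {δ_j}_{j∈J} is any basis of F_u as a right vector space over its division ring 𝔡_u of distributive elements; moreover the additions +_{δ_i u} and +_{δ_j u} are pairwise distinct for i ≠ j. -/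
section Aux
variable {F : Type*} [ScalarGroup F] (p : F → F → F)

lemma aux_usum_ite (hp0 : ∀ a : F, p a 0 = a) (h0p : ∀ a : F, p 0 a = a)
    {ι : Type*} [DecidableEq ι] (g : ι → F) (i' : ι) :
    ∀ l : List ι, l.Nodup →
      usum p (l.map fun i => if i' = i then g i else 0) =
        if i' ∈ l then g i' else 0 := by
  intro l
  induction l with
  | nil => intro _; simp [usum]
  | cons a t ih =>
    intro hnd
    rw [List.nodup_cons] at hnd
    have hz : ∀ l' : List F, (∀ a ∈ l', a = (0:F)) → usum p l' = 0 := by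
      intro l' hl'
      induction l' with
      | nil => rfl
      | cons b t' ih' =>
        have hb : b = 0 := hl' b (by simp)
        have ht' := ih' (fun x hx => hl' x (by simp [hx]))
        simp [usum, hb, ht', hp0]
    rcases eq_or_ne i' a with h | h
    · subst h
      have hnt : i' ∉ t := hnd.1
      have : usum p (t.map fun i => if i' = i then g i else 0) = 0 := by
        apply hz
        intro x hx
        simp only [List.mem_map] at hx
        obtain ⟨b, hb, rfl⟩ := hx
        rw [if_neg]
        intro hc; exact hnt (hc ▸ hb)
      simp [usum, this, hp0]
    · rw [List.map_cons]
      simp only [usum]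
      rw [if_neg h, h0p, ih hnd.2]
      by_cases hm : i' ∈ t <;> simp [List.mem_cons, h, hm]

lemma aux_usum_perm (hc : ∀ a b : F, p a b = p b a)
    (ha : ∀ a b c : F, p (p a b) c = p a (p b c)) :
    ∀ {l l' : List F}, l.Perm l' → usum p l = usum p l' := by
  intro l l' h
  induction h with
  | nil => rfl
  | cons x _ ih => simp only [usum, ih]
  | swap x y l => simp only [usum]; rw [← ha, hc y x, ha]
  | trans _ _ ih1 ih2 => exact ih1.trans ih2

lemma aux_phi_listsum {V I : Type*} [AddCommGroup V] (φ : V → (I →₀ F))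
    (φ0 : ∀ i, φ 0 i = 0)
    (φadd : ∀ (v w : V) (i : I), φ (v + w) i = p (φ v i) (φ w i)) :
    ∀ (l : List V) (i : I), φ l.sum i = usum p (l.map fun v => φ v i) := by
  intro l i
  induction l with
  | nil => simpa [usum] using φ0 i
  | cons a t ih => simp only [List.sum_cons, List.map_cons, usum, φadd, ih]

end Aux

/-- If a nontrivial near-vector space `V` is `F`-isomorphic to the canonical
near-vector space `F_u^(I)` (finitely supported tuples, componentwise `+_u` and
multiplication), then `V` is the internal direct sum `⊕_{j∈J} Q_{δ_j u}(V)` for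
any basis `{δ_j}` of `F_u` as a right vector space over its division ring `𝔡_u`
of distributive elements; moreover the additions `+_{δ_i u}` are pairwise
distinct. -/
theorem stmt16 (F V : Type*) [ScalarGroup F] [AddCommGroup V] [NearVectorSpace F V]
    (hV : ∃ v : V, v ≠ 0)
    (u : V) (hu : u ∈ quasiKernel F V) (hu0 : u ≠ 0)
    (p : F → F → F) (hp : ∀ α β : F, α • u + β • u = p α β • u)
    (I : Type*)
    (hiso : ∃ φ : V → (I →₀ F), Function.Bijective φ ∧
      (∀ (v w : V) (i : I), φ (v + w) i = p (φ v i) (φ w i)) ∧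
      (∀ (α : F) (v : V) (i : I), φ (α • v) i = α * φ v i))
    {J : Type*} (δ : J → F)
    -- `{δ_j}` is a basis of `F_u` as a right `𝔡_u`-vector space
    (hind : ∀ (s : Finset J) (c : J → F), (∀ j, c j ∈ dstrU p) →
      usum p (s.toList.map (fun j => δ j * c j)) = 0 → ∀ j ∈ s, c j = 0)
    (hgen : ∀ x : F, ∃ (s : Finset J) (c : J → F), (∀ j, c j ∈ dstrU p) ∧
      x = usum p (s.toList.map (fun j => δ j * c j)))
    (q : J → F → F → F)
    (hq : ∀ (j : J) (α β : F),
      α • (δ j • u) + β • (δ j • u) = q j α β • (δ j • u)) :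
    (∀ v : V, ∃ (s : Finset J) (w : J → V),
      (∀ j ∈ s, w j ∈ QU F V (q j)) ∧ v = ∑ j ∈ s, w j) ∧
    (∀ (s : Finset J) (w : J → V), (∀ j ∈ s, w j ∈ QU F V (q j)) →
      ∑ j ∈ s, w j = 0 → ∀ j ∈ s, w j = 0) ∧
    (∀ i j : J, i ≠ j → q i ≠ q j) := by
    classical
  obtain ⟨φ, ⟨φinj, φsurj⟩, φadd, φsmul⟩ := hiso
  have free : ∀ (a b : F) (v : V), v ≠ 0 → a • v = b • v → a = b :=
    NearVectorSpace.free
  have zsmul : ∀ v : V, (0 : F) • v = 0 := NearVectorSpace.zero_smul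
  have msmul : ∀ (a b : F) (v : V), (a * b) • v = a • (b • v) := NearVectorSpace.mul_smul
  have asmul : ∀ (a : F) (v w : V), a • (v + w) = a • v + a • w := NearVectorSpace.smul_add
  have mz : ∀ a : F, a * 0 = 0 := ScalarGroup.mul_zero
  have zm : ∀ a : F, 0 * a = 0 := ScalarGroup.zero_mul
  have pe : ∀ a b : F, p a b • u = a • u + b • u := fun a b => (hp a b).symm
  have pfree : ∀ a b : F, a • u = b • u → a = b := fun a b h => free a b u hu0 h
  have p0 : ∀ a : F, p a 0 = a := by
    intro a; apply pfree; rw [pe, zsmul, add_zero]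
  have p0' : ∀ a : F, p 0 a = a := by
    intro a; apply pfree; rw [pe, zsmul, zero_add]
  have pcomm : ∀ a b : F, p a b = p b a := by
    intro a b; apply pfree; rw [pe, pe, add_comm]
  have prearr : ∀ a b c d : F, p (p a b) (p c d) = p (p a c) (p b d) := by
    intro a b c d; apply pfree; simp only [pe]; abel
  have passoc : ∀ a b c : F, p (p a b) c = p a (p b c) := by
    intro a b c; apply pfree; simp only [pe]; abel
  have φ0 : ∀ i : I, φ 0 i = 0 := by
    intro i
    have h := φsmul 0 0 i
    rw [zsmul, zm] at h
    exact h
  have φ0' : φ (0 : V) = 0 := Finsupp.ext φ0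
  obtain ⟨v0, hv00⟩ := hV
  have hφv0 : φ v0 ≠ 0 := fun h => hv00 (φinj (h.trans φ0'.symm))
  obtain ⟨i₀, -⟩ := Finsupp.support_nonempty_iff.mpr hφv0
  choose ψ hψ using fun (i : I) (x : F) => φsurj (Finsupp.single i x)
  have φψ : ∀ (i : I) (x : F) (i' : I), φ (ψ i x) i' = if i' = i then x else 0 := by
    intro i x i'
    rcases eq_or_ne i' i with h | h
    · subst h; simp [hψ, Finsupp.single_apply]
    · simp [hψ, Finsupp.single_apply, h, Ne.symm h]
  have ldistr : ∀ a x y : F, a * p x y = p (a * x) (a * y) := by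
    intro a x y
    have h1 : φ (a • (ψ i₀ x + ψ i₀ y)) i₀ = a * p x y := by
      rw [φsmul, φadd, φψ, φψ]; simp
    have h2 : φ (a • (ψ i₀ x + ψ i₀ y)) i₀ = p (a * x) (a * y) := by
      rw [asmul, φadd, φsmul, φsmul, φψ, φψ]; simp
    rw [← h1, h2]
  have pinv : ∀ x : F, ∃ y : F, p x y = 0 := by
    intro x
    refine ⟨φ (-(ψ i₀ x)) i₀, ?_⟩
    have h := φadd (ψ i₀ x) (-(ψ i₀ x)) i₀
    rw [add_neg_cancel] at h
    rw [φ0, φψ] at h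
    simpa using h.symm
  have pinj : ∀ x y y' : F, p x y = 0 → p x y' = 0 → y = y' := by
    intro x y y' h h'
    calc y = p y 0 := (p0 y).symm
    _ = p y (p x y') := by rw [h']
    _ = p (p y x) y' := (passoc y x y').symm
    _ = p (p x y) y' := by rw [pcomm y x]
    _ = p 0 y' := by rw [h]
    _ = y' := p0' y'
  obtain ⟨n1, hn1⟩ := pinv 1
  have hneg : ∀ a : F, p a (a * n1) = 0 := by
    intro a
    have h := ldistr a 1 n1
    rw [hn1, mz, mul_one] at h
    exact h.symm
  have dmem : ∀ c : F, c ∈ dstrU p ↔ ∀ a b : F, p a b * c = p (a * c) (b * c) :=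
    fun _ => Iff.rfl
  have d0 : (0:F) ∈ dstrU p := by
    rw [dmem]; intro a b; rw [mz, mz, mz, p0]
  have d1 : (1:F) ∈ dstrU p := by
    rw [dmem]; intro a b; rw [mul_one, mul_one, mul_one]
  have dp : ∀ c c' : F, c ∈ dstrU p → c' ∈ dstrU p → p c c' ∈ dstrU p := by
    intro c c' hc hc'
    rw [dmem] at hc hc' ⊢
    intro a b
    calc p a b * p c c' = p (p a b * c) (p a b * c') := ldistr _ _ _
    _ = p (p (a*c) (b*c)) (p (a*c') (b*c')) := by rw [hc, hc']
    _ = p (p (a*c) (a*c')) (p (b*c) (b*c')) := prearr _ _ _ _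
    _ = p (a * p c c') (b * p c c') := by rw [← ldistr, ← ldistr]
  have dn1 : n1 ∈ dstrU p := by
    rw [dmem]
    intro a b
    refine pinj (p a b) _ _ (hneg (p a b)) ?_
    calc p (p a b) (p (a*n1) (b*n1)) = p (p a (a*n1)) (p b (b*n1)) := prearr _ _ _ _
    _ = p 0 0 := by rw [hneg, hneg]
    _ = 0 := p0 0
  have hδ : ∀ j : J, δ j ≠ 0 := by
    intro j hj
    have hz : usum p (({j} : Finset J).toList.map (fun k => δ k * (fun _ : J => (1:F)) k)) = 0 := by
      rw [Finset.toList_singleton]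
      simp [usum, mul_one, hj, p0]
    have h := hind {j} (fun _ => 1) (fun _ => d1) hz j (Finset.mem_singleton_self j)
    exact ScalarGroup.one_ne_zero h
  have hq' : ∀ (j : J) (a b : F), p (a * δ j) (b * δ j) = q j a b * δ j := by
    intro j a b
    apply pfree
    rw [pe, msmul a (δ j) u, msmul b (δ j) u, hq j a b, ← msmul]
  have quMem : ∀ (r : F → F → F) (w : V), w ∈ QU F V r ↔
      (w ∈ quasiKernel F V ∧ ∀ a b : F, a • w + b • w = r a b • w) := fun _ _ => Iff.rfl
  -- Lemma A : elements of `Q_{δⱼu}` have coordinates `δ j * d` with `d` distributive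
  have QUP : ∀ (j : J) (w : V), (∀ a b : F, a • w + b • w = q j a b • w) →
      ∀ i : I, ∃ d, d ∈ dstrU p ∧ φ w i = δ j * d := by
    intro j w hw i
    by_cases hx : φ w i = 0
    · exact ⟨0, d0, by rw [mz, hx]⟩
    · have eq1 : ∀ a b : F, p (a * φ w i) (b * φ w i) = q j a b * φ w i := by
        intro a b
        have h := congrArg (fun v => φ v i) (hw a b)
        simpa [φadd, φsmul] using h
      refine ⟨(δ j)⁻¹ * φ w i, ?_, ?_⟩
      · rw [dmem]
        intro a b
        have hX : q j (a * (δ j)⁻¹) (b * (δ j)⁻¹) = p a b * (δ j)⁻¹ := by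
          have h1 := hq' j (a * (δ j)⁻¹) (b * (δ j)⁻¹)
          simp only [mul_assoc, ScalarGroup.inv_mul_cancel _ (hδ j), mul_one] at h1
          calc q j (a * (δ j)⁻¹) (b * (δ j)⁻¹)
              = (q j (a * (δ j)⁻¹) (b * (δ j)⁻¹) * δ j) * (δ j)⁻¹ := by
                rw [mul_assoc, ScalarGroup.mul_inv_cancel _ (hδ j), mul_one]
            _ = p a b * (δ j)⁻¹ := by rw [← h1]
        calc p a b * ((δ j)⁻¹ * φ w i) = (p a b * (δ j)⁻¹) * φ w i := (mul_assoc _ _ _).symm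
          _ = q j (a * (δ j)⁻¹) (b * (δ j)⁻¹) * φ w i := by rw [hX]
          _ = p (a * (δ j)⁻¹ * φ w i) (b * (δ j)⁻¹ * φ w i) := (eq1 _ _).symm
          _ = p (a * ((δ j)⁻¹ * φ w i)) (b * ((δ j)⁻¹ * φ w i)) := by
              simp only [mul_assoc]
      · rw [← mul_assoc, ScalarGroup.mul_inv_cancel _ (hδ j), one_mul]
  -- converse : such coordinates give membership in `Q_{δⱼu}`
  have PQU : ∀ (j : J) (w : V), (∀ i : I, ∃ d, d ∈ dstrU p ∧ φ w i = δ j * d) →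
      w ∈ QU F V (q j) := by
    intro j w hw
    have key : ∀ a b : F, a • w + b • w = q j a b • w := by
      intro a b
      apply φinj
      apply Finsupp.ext
      intro i
      obtain ⟨d, hd, hx⟩ := hw i
      rw [dmem] at hd
      rw [φadd, φsmul, φsmul, φsmul, hx, ← mul_assoc, ← mul_assoc, ← mul_assoc,
        ← hd, hq']
    have hqk : w ∈ quasiKernel F V := by
      simp only [quasiKernel, Set.mem_setOf_eq]
      exact fun a b => ⟨q j a b, key a b⟩
    exact (quMem _ _).mpr ⟨hqk, key⟩
  have ψadd : ∀ (i : I) (x y : F), ψ i (p x y) = ψ i x + ψ i y := by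
    intro i x y
    apply φinj
    apply Finsupp.ext
    intro i'
    rw [φadd, φψ, φψ, φψ]
    rcases eq_or_ne i' i with h | h
    · simp [h]
    · simp [h, p0]
  have ψ0 : ∀ i : I, ψ i 0 = 0 := by
    intro i
    apply φinj
    apply Finsupp.ext
    intro i'
    rw [φψ, φ0]
    simp
  have ψusum : ∀ (i : I) (l : List F), ψ i (usum p l) = (l.map (ψ i)).sum := by
    intro i l
    induction l with
    | nil => simpa [usum] using ψ0 i
    | cons a t ih => simp only [usum, List.map_cons, List.sum_cons, ψadd, ih]
  have φfsum : ∀ (s : Finset J) (w : J → V) (i : I),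
      φ (∑ j ∈ s, w j) i = usum p (s.toList.map fun j => φ (w j) i) := by
    intro s w i
    rw [← Finset.sum_map_toList, aux_phi_listsum p φ φ0 φadd, List.map_map]
    rfl
  have φfsumI : ∀ (s : Finset I) (w : I → V) (i : I),
      φ (∑ j ∈ s, w j) i = usum p (s.toList.map fun j => φ (w j) i) := by
    intro s w i
    rw [← Finset.sum_map_toList, aux_phi_listsum p φ φ0 φadd, List.map_map]
    rfl
  have decomp : ∀ v : V, v = ∑ i ∈ (φ v).support, ψ i (φ v i) := by
    intro v
    apply φinj
    apply Finsupp.ext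
    intro i'
    rw [φfsumI]
    have he : ((φ v).support.toList.map fun i => φ (ψ i (φ v i)) i')
        = (φ v).support.toList.map fun i => if i' = i then φ v i else 0 := by
      apply List.map_congr_left
      intro i _
      exact φψ i (φ v i) i'
    rw [he, aux_usum_ite p p0 p0' _ i' _ (Finset.nodup_toList _)]
    by_cases h : i' ∈ (φ v).support
    · rw [if_pos (Finset.mem_toList.mpr h)]
    · rw [if_neg (fun hc => h (Finset.mem_toList.mp hc))]
      exact Finsupp.notMem_support_iff.mp h
  refine ⟨?_, ?_, ?_⟩
  · -- spanning
    intro v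
    choose S C hC hval using hgen
    refine ⟨(φ v).support.biUnion (fun i => S (φ v i)),
      fun j => ∑ i ∈ (φ v).support,
        (if j ∈ S (φ v i) then ψ i (δ j * C (φ v i) j) else 0), ?_, ?_⟩
    · intro j _
      apply PQU
      have Pψ : ∀ (i : I) (c : F), c ∈ dstrU p →
          ∀ i' : I, ∃ d, d ∈ dstrU p ∧ φ (ψ i (δ j * c)) i' = δ j * d := by
        intro i c hc i'
        rcases eq_or_ne i' i with h | h
        · exact ⟨c, hc, by rw [φψ, if_pos h]⟩
        · exact ⟨0, d0, by rw [φψ, if_neg h, mz]⟩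
      refine Finset.sum_induction _
        (fun w' => ∀ i' : I, ∃ d, d ∈ dstrU p ∧ φ w' i' = δ j * d) ?_ ?_ ?_
      · -- closed under addition
        intro w₁ w₂ h1 h2 i'
        obtain ⟨e1, he1, hx1⟩ := h1 i'
        obtain ⟨e2, he2, hx2⟩ := h2 i'
        exact ⟨p e1 e2, dp _ _ he1 he2, by rw [φadd, hx1, hx2, ← ldistr]⟩
      · -- zero
        exact fun i' => ⟨0, d0, by rw [φ0, mz]⟩
      · intro i _
        by_cases h : j ∈ S (φ v i)
        · rw [if_pos h]
          exact Pψ i (C (φ v i) j) (hC (φ v i) j)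
        · rw [if_neg h]
          exact fun i' => ⟨0, d0, by rw [φ0, mz]⟩
    · -- the sum equals v
      have step1 : v = ∑ i ∈ (φ v).support, ∑ j ∈ S (φ v i), ψ i (δ j * C (φ v i) j) := by
        conv_lhs => rw [decomp v]
        apply Finset.sum_congr rfl
        intro i _
        conv_lhs => rw [hval (φ v i)]
        rw [ψusum, List.map_map, Finset.sum_map_toList]
        rfl
      have step2 : ∀ i ∈ (φ v).support,
          ∑ j ∈ S (φ v i), ψ i (δ j * C (φ v i) j)
            = ∑ j ∈ (φ v).support.biUnion (fun i => S (φ v i)),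
                (if j ∈ S (φ v i) then ψ i (δ j * C (φ v i) j) else 0) := by
        intro i hi
        rw [Finset.sum_ite_mem]
        congr 1
        refine (Finset.inter_eq_right.mpr ?_).symm
        intro j hj
        exact Finset.mem_biUnion.mpr ⟨i, hi, hj⟩
      exact step1.trans ((Finset.sum_congr rfl step2).trans Finset.sum_comm)
  · -- independence
    intro s w hwQ hsum j hj
    have hshape : ∀ j' ∈ s, ∀ i : I, ∃ d, d ∈ dstrU p ∧ φ (w j') i = δ j' * d := by
      intro j' hj' i
      exact QUP j' (w j') ((quMem _ _).mp (hwQ j' hj')).2 i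
    apply φinj
    rw [φ0']
    apply Finsupp.ext
    intro i
    have key : ∀ j' ∈ s, φ (w j') i = 0 := by
      have hc : ∀ j' : J, (if h : j' ∈ s then (hshape j' h i).choose else 0) ∈ dstrU p := by
        intro j'
        by_cases h : j' ∈ s
        · rw [dif_pos h]; exact (hshape j' h i).choose_spec.1
        · rw [dif_neg h]; exact d0
      have husum : usum p (s.toList.map fun j' =>
          δ j' * (if h : j' ∈ s then (hshape j' h i).choose else 0)) = 0 := by
        have he : (s.toList.map fun j' =>
            δ j' * (if h : j' ∈ s then (hshape j' h i).choose else 0))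
              = s.toList.map fun j' => φ (w j') i := by
          apply List.map_congr_left
          intro j' hj'
          rw [Finset.mem_toList] at hj'
          rw [dif_pos hj', ← (hshape j' hj' i).choose_spec.2]
        rw [he, ← φfsum, hsum, φ0]
      intro j' hj'
      have h0 := hind s _ hc husum j' hj'
      rw [dif_pos hj'] at h0
      rw [(hshape j' hj' i).choose_spec.2, h0, mz]
    simp only [Finsupp.coe_zero, Pi.zero_apply]
    exact key j hj
  · -- distinctness
    intro i j hij hqe
    have hc : (δ i)⁻¹ * δ j ∈ dstrU p := by
      rw [dmem]
      intro a b
      have h1 := hq' i (a * (δ i)⁻¹) (b * (δ i)⁻¹)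
      rw [hqe] at h1
      simp only [mul_assoc, ScalarGroup.inv_mul_cancel _ (hδ i), mul_one] at h1
      have h2 := hq' j (a * (δ i)⁻¹) (b * (δ i)⁻¹)
      have hX : q j (a * (δ i)⁻¹) (b * (δ i)⁻¹) = p a b * (δ i)⁻¹ := by
        calc q j (a * (δ i)⁻¹) (b * (δ i)⁻¹)
            = (q j (a * (δ i)⁻¹) (b * (δ i)⁻¹) * δ i) * (δ i)⁻¹ := by
              rw [mul_assoc, ScalarGroup.mul_inv_cancel _ (hδ i), mul_one]
          _ = p a b * (δ i)⁻¹ := by rw [← h1]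
      calc p a b * ((δ i)⁻¹ * δ j) = (p a b * (δ i)⁻¹) * δ j := (mul_assoc _ _ _).symm
        _ = q j (a * (δ i)⁻¹) (b * (δ i)⁻¹) * δ j := by rw [hX]
        _ = p (a * (δ i)⁻¹ * δ j) (b * (δ i)⁻¹ * δ j) := h2.symm
        _ = p (a * ((δ i)⁻¹ * δ j)) (b * ((δ i)⁻¹ * δ j)) := by simp only [mul_assoc]
    have hδj : δ i * ((δ i)⁻¹ * δ j) = δ j := by
      rw [← mul_assoc, ScalarGroup.mul_inv_cancel _ (hδ i), one_mul]
    have hcfd : ∀ k : J, (if k = i then (δ i)⁻¹ * δ j else if k = j then n1 else 0)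
        ∈ dstrU p := by
      intro k
      by_cases h1' : k = i
      · rw [if_pos h1']; exact hc
      · rw [if_neg h1']
        by_cases h2' : k = j
        · rw [if_pos h2']; exact dn1
        · rw [if_neg h2']; exact d0
    have husum : usum p (({i, j} : Finset J).toList.map fun k =>
        δ k * (if k = i then (δ i)⁻¹ * δ j else if k = j then n1 else 0)) = 0 := by
      have hins : i ∉ ({j} : Finset J) := by simp [hij]
      have hperm : (({i, j} : Finset J).toList).Perm [i, j] := by
        have h := Finset.toList_insert hins
        rw [Finset.toList_singleton] at h
        exact h
      rw [aux_usum_perm p pcomm passoc (hperm.map _)]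
      simp only [List.map_cons, List.map_nil, usum, eq_self_iff_true, if_true,
        if_neg (Ne.symm hij), p0]
      rw [hδj]
      exact hneg (δ j)
    have hz := hind {i, j} _ hcfd husum i (by simp)
    have hz' : (δ i)⁻¹ * δ j = 0 := by simpa using hz
    apply hδ j
    rw [← hδj, hz', mz]
end

section
/- Let V be a nontrivial near-vector space over a scalar group F. If there exists a scalar basis ℬ ⊆ Q(V)\{0} of V over F such that +_{b₁} = +_{b₂} for all b₁, b₂ ∈ ℬ, then V is F-isomorphic to the canonical near-vector space F_u^(ℬ) for u ∈ ℬ, via the map sending Σ_{b∈ℬ} λ_b b to (λ_b)_{b∈ℬ}. -/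
section Aux
variable {F V : Type*} [ScalarGroup F] [AddCommGroup V] [NearVectorSpace F V]

lemma nvs_smul_zero (a : F) : a • (0 : V) = 0 := by
  have h := NearVectorSpace.smul_add a (0 : V) 0
  rw [add_zero] at h
  exact (left_eq_add.mp h)

lemma nvs_smul_neg (a : F) (v : V) : a • (-v) = -(a • v) := by
  have h := NearVectorSpace.smul_add a v (-v)
  rw [add_neg_cancel, nvs_smul_zero] at h
  exact (neg_eq_of_add_eq_zero_right h.symm).symm

lemma nvs_smul_sum (α : F) {ι : Type*} (t : Finset ι) (f : ι → V) :
    α • (∑ b ∈ t, f b) = ∑ b ∈ t, α • f b := by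
  classical
  induction t using Finset.induction with
  | empty => simpa using nvs_smul_zero α
  | insert _ _ h ih =>
      rw [Finset.sum_insert h, Finset.sum_insert h, NearVectorSpace.smul_add, ih]

end Aux

/-- If a nontrivial near-vector space `V` has a scalar basis `ℬ ⊆ Q(V) \ {0}`
all of whose elements induce the same addition `p = +_u` (`u ∈ ℬ`), then `V` is
`F`-isomorphic to the canonical near-vector space `F_u^(ℬ)` via the map sending
`Σ_{b∈ℬ} λ_b b` to `(λ_b)_{b∈ℬ}` (equivalently, the additive, `F`-equivariant
bijection sending each `b ∈ ℬ` to the corresponding standard basis tuple). -/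
theorem stmt17 (F V : Type*) [ScalarGroup F] [AddCommGroup V] [NearVectorSpace F V]
    (hV : ∃ v : V, v ≠ 0)
    (B : Set V) (hBQ : B ⊆ quasiKernel F V) (hB0 : (0 : V) ∉ B)
    (p : F → F → F) (hp : ∀ b ∈ B, ∀ α β : F, α • b + β • b = p α β • b)
    (hspan : ∀ v : V, ∃ (s : Finset V) (c : V → F), ↑s ⊆ B ∧ v = ∑ b ∈ s, c b • b)
    (hindep : ∀ (s : Finset V) (c : V → F), ↑s ⊆ B →
      ∑ b ∈ s, c b • b = 0 → ∀ b ∈ s, c b = 0) :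
    ∃ φ : V → (B →₀ F), Function.Bijective φ ∧
      (∀ (v w : V) (b : B), φ (v + w) b = p (φ v b) (φ w b)) ∧
      (∀ (α : F) (v : V) (b : B), φ (α • v) b = α * φ v b) ∧
      (∀ b : B, φ (b : V) = Finsupp.single b 1) := by
  classical
  have free := fun (a b : F) (v : V) => NearVectorSpace.free a b v
  -- B is nonempty
  have hBne : ∃ b0 : V, b0 ∈ B := by
    obtain ⟨v, hv⟩ := hV
    obtain ⟨s, c, hsB, hrep⟩ := hspan v
    rcases Finset.eq_empty_or_nonempty s with h | ⟨b, hb⟩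
    · subst h; simp at hrep; exact absurd hrep hv
    · exact ⟨b, hsB hb⟩
  obtain ⟨b0, hb0B⟩ := hBne
  have hne : ∀ b ∈ B, b ≠ (0 : V) := fun b hb h => hB0 (h ▸ hb)
  have hp00 : p 0 0 = 0 := by
    have h := hp b0 hb0B 0 0
    rw [NearVectorSpace.zero_smul, add_zero] at h
    exact (free _ _ _ (hne b0 hb0B) ((NearVectorSpace.zero_smul b0).trans h)).symm
  -- every basis element has a "negation coefficient"
  have hneg : ∀ b : V, b ∈ B → ∃ m : F, m • b = -b := by
    intro b hb
    obtain ⟨s, c, hsB, hrep⟩ := hspan (-b)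
    by_cases hbs : b ∈ s
    · have hsum : ∑ x ∈ s, (fun x => if x = b then p 1 (c b) else c x) x • x = 0 := by
        rw [← Finset.add_sum_erase s _ hbs]
        have h1 : ∑ x ∈ s.erase b, (fun x => if x = b then p 1 (c b) else c x) x • x
            = ∑ x ∈ s.erase b, c x • x :=
          Finset.sum_congr rfl fun x hx => by
            simp only [if_neg (Finset.ne_of_mem_erase hx)]
        rw [h1]
        simp only [eq_self_iff_true, if_true]
        rw [← hp b hb 1 (c b), NearVectorSpace.one_smul, add_assoc,
          Finset.add_sum_erase s (fun x => c x • x) hbs, ← hrep, add_neg_cancel]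
      have h0 := hindep s _ hsB hsum b hbs
      simp only [eq_self_iff_true, if_true] at h0
      refine ⟨c b, ?_⟩
      have h2 : (1 : F) • b + c b • b = 0 := by
        rw [hp b hb, h0, NearVectorSpace.zero_smul]
      rw [NearVectorSpace.one_smul] at h2
      exact (neg_eq_of_add_eq_zero_right h2).symm
    · exfalso
      have hsum : ∑ x ∈ insert b s, (fun x => if x = b then (1 : F) else c x) x • x = 0 := by
        rw [Finset.sum_insert hbs]
        have h1 : ∑ x ∈ s, (fun x => if x = b then (1 : F) else c x) x • x
            = ∑ x ∈ s, c x • x :=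
          Finset.sum_congr rfl fun x hx => by
            simp only [if_neg (fun h : x = b => hbs (h ▸ hx))]
        rw [h1]
        simp only [eq_self_iff_true, if_true]
        rw [NearVectorSpace.one_smul, ← hrep, add_neg_cancel]
      have hsub : ↑(insert b s) ⊆ B := by
        intro x hx
        rcases Finset.mem_insert.mp hx with h | h
        · exact h ▸ hb
        · exact hsB h
      have h0 := hindep (insert b s) _ hsub hsum b (Finset.mem_insert_self b s)
      simp only [eq_self_iff_true, if_true] at h0
      exact ScalarGroup.one_ne_zero h0
  choose m hm using hneg
  -- coordinates are unique
  have key : ∀ (t : Finset B) (f g : B → F),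
      (∑ b ∈ t, f b • (b : V)) = (∑ b ∈ t, g b • (b : V)) → ∀ b ∈ t, f b = g b := by
    intro t f g hfg b hbt
    set c : V → F := fun x =>
      if hx : x ∈ B then p (f ⟨x, hx⟩) (g ⟨x, hx⟩ * m x hx) else 0 with hc
    have hterm : ∀ b : B, (g b * m b.1 b.2) • (b : V) = -(g b • (b : V)) := by
      intro b
      rw [NearVectorSpace.mul_smul, hm b.1 b.2, nvs_smul_neg]
    have hsub : ↑(t.image (Subtype.val)) ⊆ B := by
      intro x hx
      obtain ⟨b, _, rfl⟩ := Finset.mem_image.mp hx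
      exact b.2
    have hsum : ∑ x ∈ t.image (Subtype.val), c x • x = 0 := by
      rw [Finset.sum_image (fun x _ y _ h => Subtype.ext h)]
      have h1 : ∀ b ∈ t, c (b : V) • (b : V) = f b • (b : V) + (g b * m b.1 b.2) • (b : V) := by
        intro b _
        rw [hc]
        simp only [dif_pos b.2]
        exact (hp b.1 b.2 _ _).symm
      rw [Finset.sum_congr rfl h1, Finset.sum_add_distrib]
      have h2 : ∑ b ∈ t, (g b * m b.1 b.2) • (b : V) = -∑ b ∈ t, g b • (b : V) := by
        rw [← Finset.sum_neg_distrib]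
        exact Finset.sum_congr rfl fun b _ => hterm b
      rw [h2, hfg, add_neg_cancel]
    have h0 := hindep _ c hsub hsum b.1 (Finset.mem_image_of_mem _ hbt)
    rw [hc] at h0
    simp only [dif_pos b.2] at h0
    have h3 : f b • (b : V) + (g b * m b.1 b.2) • (b : V) = 0 := by
      rw [hp b.1 b.2, h0, NearVectorSpace.zero_smul]
    rw [hterm b] at h3
    have h4 : f b • (b : V) = g b • (b : V) :=
      neg_injective (neg_eq_of_add_eq_zero_right h3)
    exact free _ _ _ (hne b.1 b.2) h4
  -- the "total" map and its properties
  have Sext : ∀ (f : B →₀ F) (t : Finset B), f.support ⊆ t →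
      ∑ b ∈ f.support, f b • (b : V) = ∑ b ∈ t, f b • (b : V) :=
    fun f t ht => Finset.sum_subset ht fun b _ hb => by
      rw [Finsupp.notMem_support_iff.mp hb, NearVectorSpace.zero_smul]
  have Sinj : ∀ f g : B →₀ F,
      (∑ b ∈ f.support, f b • (b : V)) = ∑ b ∈ g.support, g b • (b : V) → f = g := by
    intro f g h
    ext b
    by_cases hb : b ∈ f.support ∪ g.support
    · refine key (f.support ∪ g.support) f g ?_ b hb
      rw [← Sext f _ Finset.subset_union_left, ← Sext g _ Finset.subset_union_right]
      exact h
    · rw [Finset.mem_union, not_or] at hb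
      rw [Finsupp.notMem_support_iff.mp hb.1, Finsupp.notMem_support_iff.mp hb.2]
  have Ssurj : ∀ v : V, ∃ f : B →₀ F, ∑ b ∈ f.support, f b • (b : V) = v := by
    intro v
    obtain ⟨s, c, hsB, hrep⟩ := hspan v
    set e : {x // x ∈ s} → B := fun x => ⟨x.1, hsB x.2⟩ with he
    have hg : ∀ b : B, (fun b : B => if b.1 ∈ s then c b.1 else 0) b ≠ 0 →
        b ∈ s.attach.image e := by
      intro b hb
      by_cases hbs : b.1 ∈ s
      · exact Finset.mem_image.mpr ⟨⟨b.1, hbs⟩, Finset.mem_attach _ _, Subtype.ext rfl⟩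
      · simp only [if_neg hbs] at hb; exact absurd rfl hb
    refine ⟨Finsupp.onFinset _ _ hg, ?_⟩
    rw [Sext _ _ (Finsupp.support_onFinset_subset)]
    have hinj : ∀ x ∈ s.attach, ∀ y ∈ s.attach, e x = e y → x = y := by
      intro x _ y _ h
      have h2 := Subtype.ext_iff.mp h
      exact Subtype.ext h2
    rw [Finset.sum_image hinj]
    have h1 : ∀ x ∈ s.attach,
        (Finsupp.onFinset _ _ hg : B →₀ F) (e x) • ((e x : B) : V) = c x.1 • x.1 := by
      intro x _
      rw [Finsupp.onFinset_apply]
      simp only [he, if_pos x.2]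
    rw [Finset.sum_congr rfl h1, Finset.sum_attach s (fun b => c b • b), hrep]
  choose φ hφ using Ssurj
  have φS : ∀ f : B →₀ F, φ (∑ b ∈ f.support, f b • (b : V)) = f :=
    fun f => Sinj _ _ (hφ _)
  have hadd : ∀ f g : B →₀ F,
      ∑ b ∈ (Finsupp.zipWith p hp00 f g).support, (Finsupp.zipWith p hp00 f g) b • (b : V)
      = (∑ b ∈ f.support, f b • (b : V)) + ∑ b ∈ g.support, g b • (b : V) := by
    intro f g
    rw [Sext _ (f.support ∪ g.support) Finsupp.support_zipWith,
      Sext f _ Finset.subset_union_left, Sext g _ Finset.subset_union_right,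
      ← Finset.sum_add_distrib]
    exact Finset.sum_congr rfl fun b _ => by
      rw [Finsupp.zipWith_apply, ← hp b.1 b.2]
  have hsm : ∀ (α : F) (f : B →₀ F),
      ∑ b ∈ (Finsupp.mapRange (fun x => α * x) (ScalarGroup.mul_zero α) f).support,
        (Finsupp.mapRange (fun x => α * x) (ScalarGroup.mul_zero α) f) b • (b : V)
      = α • ∑ b ∈ f.support, f b • (b : V) := by
    intro α f
    rw [Sext _ f.support Finsupp.support_mapRange, nvs_smul_sum]
    exact Finset.sum_congr rfl fun b _ => by
      rw [Finsupp.mapRange_apply, NearVectorSpace.mul_smul]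
  have hone : ∀ b : B,
      ∑ x ∈ (Finsupp.single b (1 : F)).support, (Finsupp.single b (1 : F)) x • (x : V)
      = (b : V) := by
    intro b
    rw [Sext _ {b} Finsupp.support_single_subset, Finset.sum_singleton,
      Finsupp.single_eq_same, NearVectorSpace.one_smul]
  refine ⟨φ, ⟨fun v w h => by rw [← hφ v, ← hφ w, h], fun f => ⟨_, φS f⟩⟩, ?_, ?_, ?_⟩
  · intro v w b
    have h1 : φ (v + w) = Finsupp.zipWith p hp00 (φ v) (φ w) := by
      conv_lhs => rw [← hφ v, ← hφ w, ← hadd (φ v) (φ w)]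
      exact φS _
    rw [h1, Finsupp.zipWith_apply]
  · intro α v b
    have h1 : φ (α • v) = Finsupp.mapRange (fun x => α * x) (ScalarGroup.mul_zero α) (φ v) := by
      conv_lhs => rw [← hφ v, ← hsm α (φ v)]
      exact φS _
    rw [h1, Finsupp.mapRange_apply]
  · intro b
    conv_lhs => rw [← hone b]
    exact φS _
end

section
/- Let V be a regular near-vector space over a scalar group F and u a nonzero element of the quasi-kernel. Then the dimension of V as a near-vector space over F (the cardinality of any scalar basis) equals the dimension of Q_u(V) as a vector space over the division ring 𝔡_u of distributive elements of F_u. -/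
set_option linter.unusedSectionVars false
set_option linter.unusedVariables false


namespace NVSAux

variable {F V : Type*} [ScalarGroup F] [AddCommGroup V] [NearVectorSpace F V]

lemma smul_zero' (a : F) : a • (0 : V) = 0 := by
  have h := NearVectorSpace.smul_add a (0:V) 0
  rw [add_zero] at h
  exact (left_eq_add.mp h)

lemma smul_neg' (a : F) (v : V) : a • (-v) = -(a • v) := by
  have h := NearVectorSpace.smul_add a v (-v)
  rw [add_neg_cancel, smul_zero'] at h
  exact (eq_neg_of_add_eq_zero_right h.symm)

lemma smul_sum' {α : Type*} (a : F) (s : Finset α) (f : α → V) :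
    a • ∑ x ∈ s, f x = ∑ x ∈ s, a • f x :=
  by
  classical
  induction s using Finset.induction with
  | empty => simp only [Finset.sum_empty]; exact smul_zero' a
  | @insert x s hx ih =>
      rw [Finset.sum_insert hx, Finset.sum_insert hx, NearVectorSpace.smul_add, ih]

lemma mul_right_cancel0 {a b c : F} (hc : c ≠ 0) (h : a * c = b * c) : a = b := by
  have := congrArg (· * c⁻¹) h
  simpa [mul_assoc, ScalarGroup.mul_inv_cancel c hc] using this

lemma eq_zero_of_mul_right {a b : F} (hb : b ≠ 0) (h : a * b = 0) : a = 0 :=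
  mul_right_cancel0 hb (h.trans (ScalarGroup.zero_mul b).symm)

lemma zero_mem_qk : (0 : V) ∈ quasiKernel F V := by
  simp only [quasiKernel, Set.mem_setOf_eq]
  intro α β
  exact ⟨0, by rw [smul_zero', smul_zero', smul_zero', add_zero]⟩

lemma smul_mem_qk {q : V} (hq : q ∈ quasiKernel F V) (γ : F) :
    γ • q ∈ quasiKernel F V := by
  rcases eq_or_ne γ 0 with rfl | hγ
  · rw [NearVectorSpace.zero_smul]; exact zero_mem_qk
  · intro α β
    obtain ⟨δ, hδ⟩ := hq (α * γ) (β * γ)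
    refine ⟨δ * γ⁻¹, ?_⟩
    rw [← NearVectorSpace.mul_smul, ← NearVectorSpace.mul_smul, hδ,
      ← NearVectorSpace.mul_smul, mul_assoc, ScalarGroup.inv_mul_cancel γ hγ, mul_one]

/-- Bundled core data: `u` a nonzero quasi-kernel element with addition `p`,
and `E` a global scalar acting as `-1`. -/
structure Data (p : F → F → F) (u : V) (E : F) : Prop where
  hu0 : u ≠ 0
  hp : ∀ α β : F, α • u + β • u = p α β • u
  hE : ∀ v : V, E • v = -v

namespace Data

variable {p : F → F → F} {u : V} {E : F} (h : Data p u E)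
include h

lemma free {a b : F} (hab : a • u = b • u) : a = b :=
  NearVectorSpace.free a b u h.hu0 hab

lemma pE : p 1 E = 0 := by
  apply h.free
  rw [← h.hp, NearVectorSpace.one_smul, h.hE, add_neg_cancel, NearVectorSpace.zero_smul]

lemma pzr (a : F) : p a 0 = a := by
  apply h.free
  rw [← h.hp, NearVectorSpace.zero_smul, add_zero]

lemma pzl (a : F) : p 0 a = a := by
  apply h.free
  rw [← h.hp, NearVectorSpace.zero_smul, zero_add]

lemma pcomm (a b : F) : p a b = p b a := by
  apply h.free; rw [← h.hp, ← h.hp, add_comm]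

lemma passoc (a b c : F) : p (p a b) c = p a (p b c) := by
  apply h.free
  rw [← h.hp, ← h.hp, ← h.hp, ← h.hp, add_assoc]

lemma pcancel {a b c : F} (hab : p c a = p c b) : a = b := by
  have h2 : c • u + a • u = c • u + b • u := by rw [h.hp, h.hp, hab]
  exact h.free (add_left_cancel h2)

lemma pldist (c a b : F) : c * p a b = p (c * a) (c * b) := by
  apply h.free
  rw [← h.hp, NearVectorSpace.mul_smul, ← h.hp, NearVectorSpace.smul_add,
    ← NearVectorSpace.mul_smul, ← NearVectorSpace.mul_smul]

lemma pnegE (a : F) : p a (a * E) = 0 := by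
  apply h.free
  rw [← h.hp, NearVectorSpace.mul_smul, h.hE, smul_neg', add_neg_cancel,
    NearVectorSpace.zero_smul]

lemma EE : E * E = 1 := by
  apply h.free
  rw [NearVectorSpace.mul_smul, h.hE, h.hE, neg_neg, NearVectorSpace.one_smul]

lemma E0 : E ≠ 0 := by
  intro h0
  apply h.hu0
  have := h.hE u
  rw [h0, NearVectorSpace.zero_smul] at this
  exact (neg_eq_zero.mp this.symm)

lemma d_zero : (0 : F) ∈ dstrU p := by
  intro α β
  rw [ScalarGroup.mul_zero, ScalarGroup.mul_zero, ScalarGroup.mul_zero, h.pzr]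

lemma d_one : (1 : F) ∈ dstrU p := by
  intro α β; rw [mul_one, mul_one, mul_one]

lemma d_mul {a b : F} (ha : a ∈ dstrU p) (hb : b ∈ dstrU p) : a * b ∈ dstrU p := by
  intro α β
  rw [← mul_assoc, ha α β, hb, mul_assoc, mul_assoc]

lemma d_E : E ∈ dstrU p := by
  intro α β
  apply h.pcancel (c := p α β)
  have l1 : p (p α β) (p α β * E) = 0 := h.pnegE (p α β)
  have l2 : p (p α β) (p (α * E) (β * E)) = 0 := by
    apply h.free
    rw [NearVectorSpace.zero_smul, ← h.hp, ← h.hp, ← h.hp, NearVectorSpace.mul_smul,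
      NearVectorSpace.mul_smul, h.hE, smul_neg', smul_neg']
    abel
  rw [l1, l2]

lemma d_add {a b : F} (ha : a ∈ dstrU p) (hb : b ∈ dstrU p) : p a b ∈ dstrU p := by
  intro α β
  apply h.free
  have expand : ∀ c : F, (c * p a b) • u = (c * a) • u + (c * b) • u := by
    intro c
    rw [h.pldist, ← h.hp]
  rw [show p α β * p a b = p α β * p a b from rfl]
  rw [expand (p α β), ha α β, hb α β, ← h.hp, ← h.hp, ← h.hp, expand α, expand β]
  abel

lemma d_inv {a : F} (ha : a ∈ dstrU p) (h0 : a ≠ 0) : a⁻¹ ∈ dstrU p := by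
  intro α β
  have key : p (α * a⁻¹) (β * a⁻¹) * a = p α β := by
    rw [ha, mul_assoc, mul_assoc, ScalarGroup.inv_mul_cancel a h0, mul_one, mul_one]
  rw [← key, mul_assoc, ScalarGroup.mul_inv_cancel a h0, mul_one]

lemma d_neg {a : F} (ha : a ∈ dstrU p) : a * E ∈ dstrU p :=
  h.d_mul ha h.d_E

end Data

end NVSAux

namespace NVSAux

variable {F V : Type*} [ScalarGroup F] [AddCommGroup V] [NearVectorSpace F V]
variable {p : F → F → F} {u : V} {E : F}

set_option maxHeartbeats 1000000 in
open Classical in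
noncomputable def dRing (h : Data p u E) : DivisionRing (dstrU p) :=
  letI : Zero (dstrU p) := ⟨⟨0, h.d_zero⟩⟩
  letI : One (dstrU p) := ⟨⟨1, h.d_one⟩⟩
  letI : Add (dstrU p) := ⟨fun a b => ⟨p a.1 b.1, h.d_add a.2 b.2⟩⟩
  letI : Mul (dstrU p) := ⟨fun a b => ⟨a.1 * b.1, h.d_mul a.2 b.2⟩⟩
  letI : Neg (dstrU p) := ⟨fun a => ⟨a.1 * E, h.d_neg a.2⟩⟩
  letI : Inv (dstrU p) := ⟨fun a =>
    ⟨if ha : a.1 = 0 then 0 else a.1⁻¹, by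
      by_cases ha : a.1 = 0
      · rw [dif_pos ha]; exact h.d_zero
      · rw [dif_neg ha]; exact h.d_inv a.2 ha⟩⟩
  { add := (· + ·)
    zero := 0
    one := 1
    mul := (· * ·)
    neg := (- ·)
    inv := (·⁻¹)
    nsmul := nsmulRec
    zsmul := zsmulRec
    nnqsmul := _
    qsmul := _
    add_assoc := fun a b c => by refine Subtype.ext ?_; exact h.passoc a.1 b.1 c.1
    zero_add := fun a => by refine Subtype.ext ?_; exact h.pzl a.1
    add_zero := fun a => by refine Subtype.ext ?_; exact h.pzr a.1
    add_comm := fun a b => by refine Subtype.ext ?_; exact h.pcomm a.1 b.1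
    neg_add_cancel := fun a => by
      refine Subtype.ext ?_; exact (h.pcomm _ _).trans (h.pnegE a.1)
    mul_assoc := fun a b c => by refine Subtype.ext ?_; exact mul_assoc a.1 b.1 c.1
    one_mul := fun a => by refine Subtype.ext ?_; exact one_mul a.1
    mul_one := fun a => by refine Subtype.ext ?_; exact mul_one a.1
    left_distrib := fun a b c => by refine Subtype.ext ?_; exact h.pldist a.1 b.1 c.1
    right_distrib := fun a b c => by refine Subtype.ext ?_; exact c.2 a.1 b.1
    zero_mul := fun a => by refine Subtype.ext ?_; exact ScalarGroup.zero_mul a.1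
    mul_zero := fun a => by refine Subtype.ext ?_; exact ScalarGroup.mul_zero a.1
    exists_pair_ne := ⟨0, 1, by
      intro hh
      exact ScalarGroup.one_ne_zero (congrArg Subtype.val hh).symm⟩
    mul_inv_cancel := fun a ha => by
      have hv : a.1 ≠ 0 := fun hh => ha (Subtype.ext hh)
      refine Subtype.ext ?_
      show a.1 * (if ha : a.1 = 0 then 0 else a.1⁻¹) = 1
      rw [dif_neg hv]
      exact ScalarGroup.mul_inv_cancel a.1 hv
    inv_zero := by
      refine Subtype.ext ?_
      show (if ha : (0:F) = 0 then (0:F) else _) = (0:F)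
      rw [dif_pos rfl] }

lemma mem_qu_of {v : V} (hmain : ∀ α β : F, α • v + β • v = p α β • v) :
    v ∈ QU F V p :=
  ⟨fun α β => ⟨p α β, hmain α β⟩, hmain⟩

lemma qu_zero : (0 : V) ∈ QU F V p :=
  mem_qu_of fun α β => by rw [smul_zero', smul_zero', smul_zero', add_zero]

lemma qu_add {v w : V} (hv : v ∈ QU F V p) (hw : w ∈ QU F V p) :
    v + w ∈ QU F V p := by
  refine mem_qu_of fun α β => ?_
  rw [NearVectorSpace.smul_add, NearVectorSpace.smul_add, NearVectorSpace.smul_add,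
    show α • v + α • w + (β • v + β • w) = (α • v + β • v) + (α • w + β • w) by abel,
    hv.2 α β, hw.2 α β]

lemma qu_neg {v : V} (hv : v ∈ QU F V p) : -v ∈ QU F V p := by
  refine mem_qu_of fun α β => ?_
  rw [smul_neg', smul_neg', smul_neg', ← neg_add, hv.2 α β]

lemma qu_smul {γ : F} {v : V} (hγ : γ ∈ dstrU p) (hv : v ∈ QU F V p) :
    γ • v ∈ QU F V p := by
  refine mem_qu_of fun α β => ?_
  rw [← NearVectorSpace.mul_smul, ← NearVectorSpace.mul_smul, ← NearVectorSpace.mul_smul,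
    hv.2 (α * γ) (β * γ), ← hγ α β, NearVectorSpace.mul_smul]

def quGrp : AddCommGroup (QU F V p) :=
  letI : Zero (QU F V p) := ⟨⟨0, qu_zero⟩⟩
  letI : Add (QU F V p) := ⟨fun a b => ⟨a.1 + b.1, qu_add a.2 b.2⟩⟩
  letI : Neg (QU F V p) := ⟨fun a => ⟨-a.1, qu_neg a.2⟩⟩
  { add := (· + ·)
    zero := 0
    neg := (- ·)
    nsmul := nsmulRec
    zsmul := zsmulRec
    add_assoc := fun a b c => by refine Subtype.ext ?_; exact add_assoc a.1 b.1 c.1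
    zero_add := fun a => by refine Subtype.ext ?_; exact zero_add a.1
    add_zero := fun a => by refine Subtype.ext ?_; exact add_zero a.1
    add_comm := fun a b => by refine Subtype.ext ?_; exact add_comm a.1 b.1
    neg_add_cancel := fun a => by refine Subtype.ext ?_; exact neg_add_cancel a.1 }

noncomputable def quMod (h : Data p u E) :
    @Module (dstrU p) (QU F V p) (dRing h).toSemiring
      (quGrp (F := F) (V := V) (p := p)).toAddCommMonoid :=
  letI := dRing h
  letI := quGrp (F := F) (V := V) (p := p)
  { smul := fun γ v => ⟨γ.1 • v.1, qu_smul γ.2 v.2⟩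
    one_smul := fun v => by refine Subtype.ext ?_; exact NearVectorSpace.one_smul v.1
    mul_smul := fun a b v => by refine Subtype.ext ?_; exact NearVectorSpace.mul_smul a.1 b.1 v.1
    smul_zero := fun a => by refine Subtype.ext ?_; exact smul_zero' a.1
    smul_add := fun a v w => by refine Subtype.ext ?_; exact NearVectorSpace.smul_add a.1 v.1 w.1
    add_smul := fun a b v => by refine Subtype.ext ?_; exact (v.2.2 a.1 b.1).symm
    zero_smul := fun v => by refine Subtype.ext ?_; exact NearVectorSpace.zero_smul v.1 }

end NVSAux


set_option maxHeartbeats 1000000 in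
/-- For a regular near-vector space `V` and a nonzero quasi-kernel element `u`,
the dimension of `V` over `F` (the cardinality of any scalar basis) equals the
dimension of `Q_u(V)` as a vector space over the division ring `𝔡_u`:
any scalar basis `B` of `V` and any `𝔡_u`-basis `C` of `Q_u(V)` have the same
cardinality. -/
theorem stmt18 (F V : Type*) [ScalarGroup F] [AddCommGroup V] [NearVectorSpace F V]
    (hreg : ∀ v ∈ quasiKernel F V, v ≠ 0 → ∀ w ∈ quasiKernel F V, w ≠ 0 →
      ∃ lam : F, lam ≠ 0 ∧ v + lam • w ∈ quasiKernel F V)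
    (u : V) (hu : u ∈ quasiKernel F V) (hu0 : u ≠ 0)
    (p : F → F → F) (hp : ∀ α β : F, α • u + β • u = p α β • u)
    -- `B` is a scalar basis of `V` over `F`
    (B : Set V) (hBQ : B ⊆ quasiKernel F V) (hB0 : (0 : V) ∉ B)
    (hBspan : ∀ v : V, ∃ (s : Finset V) (c : V → F), ↑s ⊆ B ∧ v = ∑ b ∈ s, c b • b)
    (hBindep : ∀ (s : Finset V) (c : V → F), ↑s ⊆ B →
      ∑ b ∈ s, c b • b = 0 → ∀ b ∈ s, c b = 0)
    -- `C` is a basis of the `𝔡_u`-vector space `Q_u(V)`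
    (C : Set V) (hC : C ⊆ QU F V p) (hC0 : (0 : V) ∉ C)
    (hCspan : ∀ v ∈ QU F V p, ∃ (s : Finset V) (c : V → F),
      ↑s ⊆ C ∧ (∀ b, c b ∈ dstrU p) ∧ v = ∑ b ∈ s, c b • b)
    (hCindep : ∀ (s : Finset V) (c : V → F), ↑s ⊆ C → (∀ b, c b ∈ dstrU p) →
      ∑ b ∈ s, c b • b = 0 → ∀ b ∈ s, c b = 0) :
    Cardinal.mk B = Cardinal.mk C := by
  classical
  have hbne : ∀ b ∈ B, b ≠ (0 : V) := fun b hb h0 => hB0 (h0 ▸ hb)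
  -- Step 1: every scalar basis element has an additive inverse scalar ε ∈ {1, -1}
  have L2 : ∀ b ∈ B, b + b = 0 ∨ b + (ScalarGroup.negOne : F) • b = 0 := by
    intro b hb
    obtain ⟨s, c, hsB, hrep⟩ := hBspan (-b)
    by_cases hbs : b ∈ s
    · obtain ⟨γ, hγ⟩ := hBQ hb 1 (c b)
      have hsum : ∑ x ∈ s, (if x = b then γ else c x) • x = 0 := by
        rw [← Finset.add_sum_erase s _ hbs, if_pos rfl,
          Finset.sum_congr rfl (fun x hx => by
            rw [if_neg (Finset.ne_of_mem_erase hx)]), ← hγ, NearVectorSpace.one_smul]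
        have h2 : b + ∑ x ∈ s, c x • x = 0 := by rw [← hrep, add_neg_cancel]
        rw [← Finset.add_sum_erase s _ hbs, ← add_assoc] at h2
        exact h2
      have hγ0 : γ = 0 := by
        have := hBindep s _ hsB hsum b hbs
        rwa [if_pos rfl] at this
      rw [hγ0, NearVectorSpace.zero_smul, NearVectorSpace.one_smul] at hγ
      -- hγ : b + c b • b = 0
      have hb0 : b ≠ 0 := hbne b hb
      have hcb : c b • b = -b := eq_neg_of_add_eq_zero_right hγ
      have hsq : (c b * c b) • b = b := by
        rw [NearVectorSpace.mul_smul, hcb, NVSAux.smul_neg', hcb, neg_neg]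
      have hone : c b * c b = 1 :=
        NearVectorSpace.free _ _ b hb0 (hsq.trans (NearVectorSpace.one_smul b).symm)
      rcases (ScalarGroup.sq_iff (c b)).mp hone with h1 | h1
      · left; rw [h1, NearVectorSpace.one_smul] at hγ; exact hγ
      · right; rw [h1] at hγ; exact hγ
    · exfalso
      have hsum : ∑ x ∈ insert b s, (if x = b then (1 : F) else c x) • x = 0 := by
        rw [Finset.sum_insert hbs, if_pos rfl,
          Finset.sum_congr rfl (fun x hx => by
            rw [if_neg (by rintro rfl; exact hbs hx)]),
          NearVectorSpace.one_smul, ← hrep, add_neg_cancel]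
      have hsub : ↑(insert b s) ⊆ B := by
        intro x hx
        rcases Finset.mem_insert.mp hx with rfl | hx
        · exact hb
        · exact hsB hx
      have := hBindep _ _ hsub hsum b (Finset.mem_insert_self b s)
      rw [if_pos rfl] at this
      exact ScalarGroup.one_ne_zero this
  -- Step 2: a global scalar E acting as -1
  obtain ⟨E, hE⟩ : ∃ E : F, ∀ v : V, E • v = -v := by
    by_cases hneg : (ScalarGroup.negOne : F) = 1
    · refine ⟨1, fun v => ?_⟩
      have h2 : ∀ b ∈ B, b + b = (0 : V) := by
        intro b hb
        rcases L2 b hb with h | h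
        · exact h
        · rwa [hneg, NearVectorSpace.one_smul] at h
      have hvv : v + v = 0 := by
        obtain ⟨s, c, hsB, hrep⟩ := hBspan v
        rw [hrep, ← Finset.sum_add_distrib]
        refine Finset.sum_eq_zero fun x hx => ?_
        rw [← NearVectorSpace.smul_add, h2 x (hsB hx), NVSAux.smul_zero']
      rw [NearVectorSpace.one_smul]
      exact eq_neg_of_add_eq_zero_left hvv
    · have hsq : (ScalarGroup.negOne : F) * ScalarGroup.negOne = 1 :=
        (ScalarGroup.sq_iff _).mpr (Or.inr rfl)
      have hq : ∀ q ∈ quasiKernel F V, (ScalarGroup.negOne : F) • q = -q := by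
        intro q hq'
        rcases eq_or_ne q 0 with rfl | hq0
        · rw [NVSAux.smul_zero', neg_zero]
        obtain ⟨δ, hδ⟩ := hq' 1 ScalarGroup.negOne
        rw [NearVectorSpace.one_smul] at hδ
        -- hδ : q + negOne • q = δ • q
        have key : (ScalarGroup.negOne * δ) • q = (1 * δ) • q := by
          rw [NearVectorSpace.mul_smul, ← hδ, NearVectorSpace.smul_add,
            ← NearVectorSpace.mul_smul, hsq, NearVectorSpace.one_smul, one_mul, ← hδ]
          exact add_comm _ _
        have hδ0 : δ = 0 := by
          by_contra hδ0
          exact hneg (NVSAux.mul_right_cancel0 hδ0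
            (NearVectorSpace.free _ _ q hq0 key))
        rw [hδ0, NearVectorSpace.zero_smul] at hδ
        exact eq_neg_of_add_eq_zero_right hδ
      refine ⟨ScalarGroup.negOne, fun v => ?_⟩
      obtain ⟨s, c, hsB, hrep⟩ := hBspan v
      rw [hrep, NVSAux.smul_sum']
      rw [show -∑ x ∈ s, c x • x = ∑ x ∈ s, -(c x • x) from (Finset.sum_neg_distrib _).symm]
      refine Finset.sum_congr rfl fun x hx => ?_
      exact hq _ (NVSAux.smul_mem_qk (hBQ (hsB hx)) (c x))
  have hdata : NVSAux.Data p u E := ⟨hu0, hp, hE⟩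
  -- Step 3: uniqueness of coordinates w.r.t. B
  have hU : ∀ t : Finset V, ↑t ⊆ B → ∀ c c' : V → F,
      (∑ x ∈ t, c x • x) = ∑ x ∈ t, c' x • x → ∀ x ∈ t, c x = c' x := by
    intro t ht c c' hsum x hx
    have h0 : ∑ y ∈ t, (c y • y + (E * c' y) • y) = 0 := by
      rw [Finset.sum_add_distrib,
        Finset.sum_congr rfl (fun y _ => by
          rw [NearVectorSpace.mul_smul, hE (c' y • y)] :
            ∀ y ∈ t, (E * c' y) • y = -(c' y • y)),
        Finset.sum_neg_distrib, hsum, add_neg_cancel]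
    choose dd hdd using fun y (hy : y ∈ t) => hBQ (ht hy) (c y) (E * c' y)
    have hsum2 : ∑ y ∈ t, (if hy : y ∈ t then dd y hy else 0) • y = 0 := by
      rw [Finset.sum_congr rfl (fun y hy => by rw [dif_pos hy, ← hdd y hy])]
      exact h0
    have hz := hBindep t _ ht hsum2 x hx
    rw [dif_pos hx] at hz
    have hcc : c x • x + (E * c' x) • x = 0 := by
      rw [hdd x hx, hz, NearVectorSpace.zero_smul]
    have : c x • x = c' x • x := by
      have h3 : c x • x = -((E * c' x) • x) := eq_neg_of_add_eq_zero_left hcc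
      rw [h3, NearVectorSpace.mul_smul, hE (c' x • x), neg_neg]
    exact NearVectorSpace.free _ _ x (hbne x (ht hx)) this
  -- Step 4: every basis vector can be scaled into QU
  have hσ : ∀ b ∈ B, ∃ μ : F, μ ≠ 0 ∧ μ • b ∈ QU F V p := by
    intro b hb
    have hb0 : b ≠ 0 := hbne b hb
    obtain ⟨s0, c, hs0B, hrep0⟩ := hBspan u
    set s' : Finset V := s0.filter (fun x => c x ≠ 0) with hs'
    have hs'B : ↑s' ⊆ B := fun x hx => hs0B (Finset.mem_of_mem_filter x hx)
    have hne : ∀ x ∈ s', c x ≠ 0 := fun x hx => (Finset.mem_filter.mp hx).2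
    have hrep : u = ∑ x ∈ s', c x • x := by
      rw [hrep0]
      refine (Finset.sum_subset (Finset.filter_subset _ _) fun x hx hnx => ?_).symm
      have hc0 : c x = 0 := by
        by_contra hc
        exact hnx (Finset.mem_filter.mpr ⟨hx, hc⟩)
      rw [hc0, NearVectorSpace.zero_smul]
    by_cases hcb : ∃ d0 : F, d0 ≠ 0 ∧ u = d0 • b
    · obtain ⟨d0, hd0, hud⟩ := hcb
      exact ⟨d0, hd0, hud ▸ ⟨hu, hp⟩⟩
    · obtain ⟨lam, hlam0, hz⟩ := hreg u hu hu0 b (hBQ hb) hb0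
      refine ⟨lam, hlam0, NVSAux.mem_qu_of fun α β => ?_⟩
      obtain ⟨γz, hγz⟩ := hz α β
      obtain ⟨δ', hδ'⟩ := hBQ hb (α * lam) (β * lam)
      have eq1 : p α β • u + δ' • b = γz • u + (γz * lam) • b := by
        have expand : α • (u + lam • b) + β • (u + lam • b) = p α β • u + δ' • b := by
          rw [NearVectorSpace.smul_add, NearVectorSpace.smul_add,
            show α • u + α • (lam • b) + (β • u + β • (lam • b))
              = (α • u + β • u) + (α • (lam • b) + β • (lam • b)) by abel,
            hp α β, ← NearVectorSpace.mul_smul, ← NearVectorSpace.mul_smul, hδ']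
        have expand2 : γz • (u + lam • b) = γz • u + (γz * lam) • b := by
          rw [NearVectorSpace.smul_add, ← NearVectorSpace.mul_smul]
        rw [← expand, ← expand2]
        exact hγz
      have hs'ne : s'.Nonempty := by
        rcases Finset.eq_empty_or_nonempty s' with hemp | hne'
        · exfalso
          apply hu0
          rw [hrep, hemp, Finset.sum_empty]
        · exact hne'
      obtain ⟨b', hb's, hb'b⟩ : ∃ b' ∈ s', b' ≠ b := by
        by_contra hall
        push_neg at hall
        have hsing : s' = {b} := by
          obtain ⟨x, hx⟩ := hs'ne
          have hxb := hall x hx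
          refine Finset.eq_singleton_iff_unique_mem.mpr ⟨hxb ▸ hx, hall⟩
        apply hcb
        refine ⟨c b, hne b (by rw [hsing]; exact Finset.mem_singleton_self b), ?_⟩
        rw [hrep, hsing, Finset.sum_singleton]
      set s'' := s'.erase b with hs''def
      have hbs'' : b ∉ s'' := Finset.notMem_erase b s'
      set d0b : F := if b ∈ s' then c b else 0 with hd0bdef
      have hrep2 : u = ∑ x ∈ s'', c x • x + d0b • b := by
        by_cases hbs' : b ∈ s'
        · rw [hrep, ← Finset.add_sum_erase s' _ hbs', hd0bdef, if_pos hbs', add_comm]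
        · rw [hrep, hs''def, Finset.erase_eq_of_notMem hbs', hd0bdef, if_neg hbs',
            NearVectorSpace.zero_smul, add_zero]
      obtain ⟨η1, hη1⟩ := hBQ hb (p α β * d0b) δ'
      obtain ⟨η2, hη2⟩ := hBQ hb (γz * d0b) (γz * lam)
      set t := insert b s'' with htdef
      have htB : ↑t ⊆ B := by
        intro x hx
        rcases Finset.mem_insert.mp hx with rfl | hx
        · exact hb
        · exact hs'B (Finset.mem_of_mem_erase hx)
      have hLHS : ∑ x ∈ t, (if x = b then η1 else p α β * c x) • x
          = p α β • u + δ' • b := by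
        rw [htdef, Finset.sum_insert hbs'', if_pos rfl,
          Finset.sum_congr rfl (fun x hx => by
            rw [if_neg (by rintro rfl; exact hbs'' hx)]),
          hrep2, NearVectorSpace.smul_add, NVSAux.smul_sum',
          Finset.sum_congr rfl (fun x _ => (NearVectorSpace.mul_smul (p α β) (c x) x).symm :
            ∀ x ∈ s'', p α β • (c x • x) = (p α β * c x) • x),
          ← NearVectorSpace.mul_smul, ← hη1]
        abel
      have hRHS : ∑ x ∈ t, (if x = b then η2 else γz * c x) • x
          = γz • u + (γz * lam) • b := by
        rw [htdef, Finset.sum_insert hbs'', if_pos rfl,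
          Finset.sum_congr rfl (fun x hx => by
            rw [if_neg (by rintro rfl; exact hbs'' hx)]),
          hrep2, NearVectorSpace.smul_add, NVSAux.smul_sum',
          Finset.sum_congr rfl (fun x _ => (NearVectorSpace.mul_smul γz (c x) x).symm :
            ∀ x ∈ s'', γz • (c x • x) = (γz * c x) • x),
          ← NearVectorSpace.mul_smul, ← hη2]
        abel
      have hUeq := hU t htB _ _ (hLHS.trans (eq1.trans hRHS.symm))
      have hb't : b' ∈ t := Finset.mem_insert_of_mem (Finset.mem_erase.mpr ⟨hb'b, hb's⟩)
      have hγzp : p α β = γz := by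
        have := hUeq b' hb't
        rw [if_neg hb'b, if_neg hb'b] at this
        exact NVSAux.mul_right_cancel0 (hne b' hb's) this
      have hηeq : η1 = η2 := by
        have := hUeq b (Finset.mem_insert_self b s'')
        rwa [if_pos rfl, if_pos rfl] at this
      have hδ'eq : δ' = p α β * lam := by
        have hstep : (p α β * d0b) • b + δ' • b = (p α β * d0b) • b + (p α β * lam) • b := by
          rw [hη1, hηeq, ← hη2, hγzp]
        exact NearVectorSpace.free _ _ b hb0 (add_left_cancel hstep)
      rw [← NearVectorSpace.mul_smul, ← NearVectorSpace.mul_smul, hδ', hδ'eq,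
        NearVectorSpace.mul_smul]
  -- Step 5: assemble the two bases of the 𝔡-vector space QU
  choose! μ hμ using hσ
  have hμ0 : ∀ b ∈ B, μ b ≠ 0 := fun b hb => (hμ b hb).1
  have hμQU : ∀ b ∈ B, μ b • b ∈ QU F V p := fun b hb => (hμ b hb).2
  letI instD : DivisionRing ↥(dstrU p) := NVSAux.dRing hdata
  letI instG : AddCommGroup ↥(QU F V p) := NVSAux.quGrp
  letI instM : Module ↥(dstrU p) ↥(QU F V p) := NVSAux.quMod hdata
  let valH : ↥(QU F V p) →+ V :=
    { toFun := Subtype.val, map_zero' := rfl, map_add' := fun _ _ => rfl }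
  let vB : ↥B → ↥(QU F V p) := fun b => ⟨μ b.1 • b.1, hμQU b.1 b.2⟩
  let vC : ↥C → ↥(QU F V p) := fun c => ⟨c.1, hC c.2⟩
  have indB : LinearIndependent ↥(dstrU p) vB := by
    rw [linearIndependent_iff']
    intro s g hsum i hi
    have hv : ∑ j ∈ s, ((g j : F) * μ j.1) • (j.1 : V) = 0 := by
      have h2 := congrArg valH hsum
      rw [map_sum] at h2
      calc ∑ j ∈ s, ((g j : F) * μ j.1) • (j.1 : V)
          = ∑ j ∈ s, valH (g j • vB j) := Finset.sum_congr rfl (fun j _ => by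
            show ((g j : F) * μ j.1) • (j.1 : V) = (g j : F) • (μ j.1 • j.1)
            rw [NearVectorSpace.mul_smul])
        _ = valH 0 := h2
        _ = 0 := rfl
    have htB : ↑(s.image (Subtype.val : ↥B → V)) ⊆ B := by
      intro x hx
      obtain ⟨j, _, rfl⟩ := Finset.mem_image.mp hx
      exact j.2
    have hsum' : ∑ x ∈ s.image (Subtype.val : ↥B → V),
        (if hx : x ∈ B then (g ⟨x, hx⟩ : F) * μ x else 0) • x = 0 := by
      rw [Finset.sum_image (fun y _ z _ hyz => Subtype.ext hyz),
        Finset.sum_congr rfl (fun j _ => by rw [dif_pos j.2, Subtype.coe_eta] :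
          ∀ j ∈ s, (if hx : (j.1 : V) ∈ B then (g ⟨j.1, hx⟩ : F) * μ j.1 else 0) • (j.1 : V)
            = ((g j : F) * μ j.1) • (j.1 : V))]
      exact hv
    have hcc := hBindep _ _ htB hsum' i.1 (Finset.mem_image_of_mem _ hi)
    rw [dif_pos i.2, Subtype.coe_eta] at hcc
    exact Subtype.ext (NVSAux.eq_zero_of_mul_right (hμ0 i.1 i.2) hcc)
  have spanB : ⊤ ≤ Submodule.span ↥(dstrU p) (Set.range vB) := by
    rintro m -
    obtain ⟨s, c, hsB, hrep⟩ := hBspan (m : V)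
    have hcfac : ∀ x ∈ s, c x = (c x * (μ x)⁻¹) * μ x := by
      intro x hx
      rw [mul_assoc, ScalarGroup.inv_mul_cancel _ (hμ0 x (hsB hx)), mul_one]
    have claimD : ∀ x ∈ s, (c x * (μ x)⁻¹) ∈ dstrU p := by
      intro x0 hx0 α β
      have e1 : α • (m : V) + β • (m : V) = ∑ x ∈ s, (p α β * c x) • x := by
        rw [m.2.2 α β, hrep, NVSAux.smul_sum',
          Finset.sum_congr rfl (fun x _ => (NearVectorSpace.mul_smul (p α β) (c x) x).symm :
            ∀ x ∈ s, p α β • (c x • x) = (p α β * c x) • x)]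
      have e2 : α • (m : V) + β • (m : V)
          = ∑ x ∈ s, (p (α * (c x * (μ x)⁻¹)) (β * (c x * (μ x)⁻¹)) * μ x) • x := by
        conv_lhs => rw [hrep]
        rw [NVSAux.smul_sum', NVSAux.smul_sum', ← Finset.sum_add_distrib]
        refine Finset.sum_congr rfl fun x hx => ?_
        have hw := hμQU x (hsB hx)
        have hinner : (c x * (μ x)⁻¹) • (μ x • x) = c x • x := by
          rw [← NearVectorSpace.mul_smul, ← hcfac x hx]
        calc α • (c x • x) + β • (c x • x)
            = α • ((c x * (μ x)⁻¹) • (μ x • x)) + β • ((c x * (μ x)⁻¹) • (μ x • x)) := by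
              rw [hinner]
          _ = (α * (c x * (μ x)⁻¹)) • (μ x • x) + (β * (c x * (μ x)⁻¹)) • (μ x • x) := by
              rw [← NearVectorSpace.mul_smul α (c x * (μ x)⁻¹) (μ x • x),
                ← NearVectorSpace.mul_smul β (c x * (μ x)⁻¹) (μ x • x)]
          _ = p (α * (c x * (μ x)⁻¹)) (β * (c x * (μ x)⁻¹)) • (μ x • x) := hw.2 _ _
          _ = (p (α * (c x * (μ x)⁻¹)) (β * (c x * (μ x)⁻¹)) * μ x) • x := by
              rw [NearVectorSpace.mul_smul]
      have hUx := hU s hsB _ _ (e1.symm.trans e2) x0 hx0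
      have hgoal : p α β * (c x0 * (μ x0)⁻¹) = (p α β * c x0) * (μ x0)⁻¹ := by
        rw [mul_assoc]
      rw [hgoal, hUx, mul_assoc, ScalarGroup.mul_inv_cancel _ (hμ0 x0 (hsB hx0)), mul_one]
    have hmrep : m = ∑ x ∈ s.attach,
        (⟨c x.1 * (μ x.1)⁻¹, claimD x.1 x.2⟩ : ↥(dstrU p)) • vB ⟨x.1, hsB x.2⟩ := by
      apply Subtype.ext
      calc (m : V) = ∑ x ∈ s, c x • x := hrep
        _ = ∑ x ∈ s.attach, c x.1 • (x.1 : V) :=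
            (Finset.sum_attach s fun x => c x • x).symm
        _ = ∑ x ∈ s.attach, valH
              ((⟨c x.1 * (μ x.1)⁻¹, claimD x.1 x.2⟩ : ↥(dstrU p)) • vB ⟨x.1, hsB x.2⟩) :=
            Finset.sum_congr rfl (fun x _ => by
              show c x.1 • (x.1 : V) = (c x.1 * (μ x.1)⁻¹) • (μ x.1 • x.1)
              rw [← NearVectorSpace.mul_smul, ← hcfac x.1 x.2])
        _ = valH (∑ x ∈ s.attach,
              (⟨c x.1 * (μ x.1)⁻¹, claimD x.1 x.2⟩ : ↥(dstrU p)) • vB ⟨x.1, hsB x.2⟩) :=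
            (map_sum valH _ _).symm
    rw [hmrep]
    exact Submodule.sum_mem _ fun x _ =>
      Submodule.smul_mem _ _ (Submodule.subset_span ⟨⟨x.1, hsB x.2⟩, rfl⟩)
  have indC : LinearIndependent ↥(dstrU p) vC := by
    rw [linearIndependent_iff']
    intro s g hsum i hi
    have hv : ∑ j ∈ s, (g j : F) • (j.1 : V) = 0 := by
      have h2 := congrArg valH hsum
      rw [map_sum] at h2
      exact h2
    have htC : ↑(s.image (Subtype.val : ↥C → V)) ⊆ C := by
      intro x hx
      obtain ⟨j, _, rfl⟩ := Finset.mem_image.mp hx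
      exact j.2
    have hallD : ∀ x : V, (if hx : x ∈ C then (g ⟨x, hx⟩ : F) else 0) ∈ dstrU p := by
      intro x
      by_cases hx : x ∈ C
      · rw [dif_pos hx]; exact (g ⟨x, hx⟩).2
      · rw [dif_neg hx]; exact hdata.d_zero
    have hsum' : ∑ x ∈ s.image (Subtype.val : ↥C → V),
        (if hx : x ∈ C then (g ⟨x, hx⟩ : F) else 0) • x = 0 := by
      rw [Finset.sum_image (fun y _ z _ hyz => Subtype.ext hyz),
        Finset.sum_congr rfl (fun j _ => by rw [dif_pos j.2, Subtype.coe_eta] :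
          ∀ j ∈ s, (if hx : (j.1 : V) ∈ C then (g ⟨j.1, hx⟩ : F) else 0) • (j.1 : V)
            = (g j : F) • (j.1 : V))]
      exact hv
    have hcc := hCindep _ _ htC hallD hsum' i.1 (Finset.mem_image_of_mem _ hi)
    rw [dif_pos i.2, Subtype.coe_eta] at hcc
    exact Subtype.ext hcc
  have spanC : ⊤ ≤ Submodule.span ↥(dstrU p) (Set.range vC) := by
    rintro m -
    obtain ⟨s, c, hsC, hcD, hrep⟩ := hCspan (m : V) m.2
    have hmrep : m = ∑ x ∈ s.attach,
        (⟨c x.1, hcD x.1⟩ : ↥(dstrU p)) • vC ⟨x.1, hsC x.2⟩ := by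
      apply Subtype.ext
      calc (m : V) = ∑ x ∈ s, c x • x := hrep
        _ = ∑ x ∈ s.attach, c x.1 • (x.1 : V) :=
            (Finset.sum_attach s fun x => c x • x).symm
        _ = ∑ x ∈ s.attach, valH
              ((⟨c x.1, hcD x.1⟩ : ↥(dstrU p)) • vC ⟨x.1, hsC x.2⟩) :=
            Finset.sum_congr rfl (fun x _ => rfl)
        _ = valH (∑ x ∈ s.attach,
              (⟨c x.1, hcD x.1⟩ : ↥(dstrU p)) • vC ⟨x.1, hsC x.2⟩) :=
            (map_sum valH _ _).symm
    rw [hmrep]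
    exact Submodule.sum_mem _ fun x _ =>
      Submodule.smul_mem _ _ (Submodule.subset_span ⟨⟨x.1, hsC x.2⟩, rfl⟩)
  let bB : Module.Basis ↥B ↥(dstrU p) ↥(QU F V p) := Module.Basis.mk indB spanB
  let bC : Module.Basis ↥C ↥(dstrU p) ↥(QU F V p) := Module.Basis.mk indC spanC
  exact Cardinal.lift_inj.mp (mk_eq_mk_of_basis bB bC)
end
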